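/- arXiv:1501.06240 — 2 statements merged into one kernel-verified Lean document; each statement's English description precedes it below -/
import Mathlib

section
/- Let f_A = D_{M_{A+1}} - D_{M_A} and let N \leq A. Then for every x \in G_m, S_{M_N}(|\sigma_{M_{A+1}} f_A|)(x) \geq c \, D_{M_N}(x) for an absolute constant c > 0. -/
open MeasureTheory Complex Filter
open scoped Classical
open scoped ENNReal NNReal

noncomputable section

def vM (m : ℕ → ℕ) : ℕ → ℕ
  | 0 => 1
  | n + 1 => m n * vM m n

abbrev VG (m : ℕ → ℕ) := ∀ k : ℕ, Fin (m k)

def vdigit (m : ℕ → ℕ) (n j : ℕ) : ℕ := (n / vM m j) % m j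

def vpsi (m : ℕ → ℕ) (n : ℕ) (x : VG m) : ℂ :=
  ∏ k ∈ Finset.range (n + 1),
    Complex.exp (2 * Real.pi * Complex.I * (vdigit m n k) * ((x k : ℕ) : ℂ) / (m k))

def vD (m : ℕ → ℕ) (n : ℕ) (x : VG m) : ℂ := ∑ k ∈ Finset.range n, vpsi m k x

variable {m : ℕ → ℕ}

def vCoeff (μ : Measure (VG m)) (f : VG m → ℂ) (i : ℕ) : ℂ :=
  ∫ x, f x * (starRingEnd ℂ) (vpsi m i x) ∂μ

def vS (μ : Measure (VG m)) (f : VG m → ℂ) (n : ℕ) (x : VG m) : ℂ :=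
  ∑ k ∈ Finset.range n, vCoeff μ f k * vpsi m k x

def vSigma (μ : Measure (VG m)) (f : VG m → ℂ) (n : ℕ) (x : VG m) : ℂ :=
  (n : ℂ)⁻¹ * ∑ k ∈ Finset.Icc 1 n, vS μ f k x

def vCyl (m : ℕ → ℕ) (n : ℕ) (x : VG m) : Set (VG m) := {y | ∀ i < n, y i = x i}

def vI (m : ℕ → ℕ) (n : ℕ) : Set (VG m) := {y | ∀ i < n, (y i : ℕ) = 0}

def isVHaar (μ : Measure (VG m)) : Prop :=
  ∀ n (x : VG m), μ (vCyl m n x) = ((vM m n : ℝ≥0∞))⁻¹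

def vHp (μ : Measure (VG m)) (p : ℝ) (f : VG m → ℂ) : ℝ≥0∞ :=
  (∫⁻ x, (⨆ k, ENNReal.ofReal ‖vS μ f (vM m k) x‖) ^ p ∂μ) ^ (1 / p)

def vLpE (μ : Measure (VG m)) (p : ℝ) (g : VG m → ℝ≥0∞) : ℝ≥0∞ :=
  (∫⁻ x, (g x) ^ p ∂μ) ^ (1 / p)

/-- `|σ_{M_{A+1}} f_A|` as a complex-valued function. -/
def sigAbsFA (μ : Measure (VG m)) (A : ℕ) (t : VG m) : ℂ :=
  ((‖vSigma μ (fun y => vD m (vM m (A + 1)) y - vD m (vM m A) y) (vM m (A + 1)) t‖ : ℝ) : ℂ)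
namespace VAux
variable {m : ℕ → ℕ}

lemma vM_pos (hm : ∀ k, 2 ≤ m k) (n : ℕ) : 0 < vM m n := by
  induction n with
  | zero => simp [vM]
  | succ n ih => exact Nat.mul_pos (lt_of_lt_of_le two_pos (hm n)) ih

lemma vM_succ (n : ℕ) : vM m (n+1) = m n * vM m n := rfl

lemma vM_dvd (hm : ∀ k, 2 ≤ m k) {i j : ℕ} (h : i ≤ j) : vM m i ∣ vM m j := by
  induction j with
  | zero => simpa [Nat.le_zero.mp h]
  | succ j ih =>
    rcases Nat.lt_or_ge i (j+1) with h' | h'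
    · exact (ih (Nat.lt_succ_iff.mp h')).trans (dvd_mul_left _ _)
    · have : i = j + 1 := le_antisymm h h'
      simp [this]

lemma vM_mono (hm : ∀ k, 2 ≤ m k) {i j : ℕ} (h : i ≤ j) : vM m i ≤ vM m j :=
  Nat.le_of_dvd (vM_pos hm j) (vM_dvd hm h)

lemma two_pow_le_vM (hm : ∀ k, 2 ≤ m k) (n : ℕ) : 2 ^ n ≤ vM m n := by
  induction n with
  | zero => simp [vM]
  | succ n ih => calc 2^(n+1) = 2 * 2^n := by ring
                 _ ≤ m n * vM m n := Nat.mul_le_mul (hm n) ih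
                 _ = vM m (n+1) := rfl

lemma lt_vM_self (hm : ∀ k, 2 ≤ m k) (n : ℕ) : n < vM m n :=
  lt_of_lt_of_le (Nat.lt_two_pow_self (n := n)) (two_pow_le_vM hm n)

lemma vdigit_lt (hm : ∀ k, 2 ≤ m k) (k i : ℕ) : vdigit m k i < m i :=
  Nat.mod_lt _ (lt_of_lt_of_le two_pos (hm i))

lemma vdigit_eq_zero (h : k < vM m i) : vdigit m k i = 0 := by
  simp [vdigit, Nat.div_eq_of_lt h]

lemma vdigit_add_mul_low (hm : ∀ k, 2 ≤ m k) {n i a r : ℕ} (hr : r < vM m n) (hi : i < n) :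
    vdigit m (a * vM m n + r) i = vdigit m r i := by
  obtain ⟨d, hd⟩ : vM m (i+1) ∣ vM m n := vM_dvd hm hi
  have hMi : 0 < vM m i := vM_pos hm i
  have hn : vM m n = vM m i * (m i * d) := by
    rw [hd, vM_succ]; ring
  unfold vdigit
  rw [hn]
  have : a * (vM m i * (m i * d)) + r = r + vM m i * (a * (m i * d)) := by ring
  rw [this, Nat.add_mul_div_left _ _ hMi]
  have : r / vM m i + a * (m i * d) = r / vM m i + m i * (a * d) := by ring
  rw [this, Nat.add_mul_mod_self_left]

lemma vdigit_add_mul_high (hm : ∀ k, 2 ≤ m k) {n a r : ℕ} (hr : r < vM m n) :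
    vdigit m (a * vM m n + r) n = a % m n := by
  unfold vdigit
  have : a * vM m n + r = r + vM m n * a := by ring
  rw [this, Nat.add_mul_div_left _ _ (vM_pos hm n), Nat.div_eq_of_lt hr, Nat.zero_add]

lemma vdigit_inj (hm : ∀ k, 2 ≤ m k) : ∀ {n a b : ℕ}, a < vM m n → b < vM m n →
    (∀ i < n, vdigit m a i = vdigit m b i) → a = b := by
  intro n
  induction n with
  | zero => intro a b ha hb _; simp [vM] at ha hb; omega
  | succ n ih =>
    intro a b ha hb h
    have hMn : 0 < vM m n := vM_pos hm n
    have hda : a / vM m n < m n := Nat.div_lt_of_lt_mul (by rw [mul_comm]; exact ha)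
    have hdb : b / vM m n < m n := Nat.div_lt_of_lt_mul (by rw [mul_comm]; exact hb)
    have ea : a = (a / vM m n) * vM m n + a % vM m n := by
      rw [mul_comm]; exact (Nat.div_add_mod a _).symm
    have eb : b = (b / vM m n) * vM m n + b % vM m n := by
      rw [mul_comm]; exact (Nat.div_add_mod b _).symm
    have hra : a % vM m n < vM m n := Nat.mod_lt _ hMn
    have hrb : b % vM m n < vM m n := Nat.mod_lt _ hMn
    have hlow : a % vM m n = b % vM m n := by
      apply ih hra hrb
      intro i hi
      have h1 := vdigit_add_mul_low (a := a / vM m n) hm hra hi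
      have h2 := vdigit_add_mul_low (a := b / vM m n) hm hrb hi
      rw [← ea] at h1; rw [← eb] at h2
      rw [← h1, ← h2]; exact h i (hi.trans (Nat.lt_succ_self n))
    have hhigh : a / vM m n = b / vM m n := by
      have h1 := vdigit_add_mul_high (a := a / vM m n) hm hra
      have h2 := vdigit_add_mul_high (a := b / vM m n) hm hrb
      rw [← ea] at h1; rw [← eb] at h2
      have := h n (Nat.lt_succ_self n)
      rw [h1, h2, Nat.mod_eq_of_lt hda, Nat.mod_eq_of_lt hdb] at this
      exact this
    rw [ea, eb, hlow, hhigh]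

end VAux
namespace VAux
variable {m : ℕ → ℕ}

/-- The basic exponential factor. -/
def vfac (m : ℕ → ℕ) (d : ℕ) (i : ℕ) (x : VG m) : ℂ :=
  Complex.exp (2 * Real.pi * Complex.I * (d : ℂ) * ((x i : ℕ) : ℂ) / (m i))

lemma vfac_zero (i : ℕ) (x : VG m) : vfac m 0 i x = 1 := by
  simp [vfac]

lemma vpsi_def (k : ℕ) (x : VG m) :
    vpsi m k x = ∏ i ∈ Finset.range (k+1), vfac m (vdigit m k i) i x := rfl

lemma vpsi_eq_prod (hm : ∀ k, 2 ≤ m k) {k n : ℕ} (h : k < vM m n) (x : VG m) :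
    vpsi m k x = ∏ i ∈ Finset.range n, vfac m (vdigit m k i) i x := by
  have key : ∀ N₁ N₂ : ℕ, N₁ ≤ N₂ → (∀ i, N₁ ≤ i → vdigit m k i = 0) →
      ∏ i ∈ Finset.range N₁, vfac m (vdigit m k i) i x
        = ∏ i ∈ Finset.range N₂, vfac m (vdigit m k i) i x := by
    intro N₁ N₂ hle h1
    refine Finset.prod_subset (Finset.range_subset_range.mpr hle) ?_
    intro i hi hni
    rw [h1 i (by simpa using hni), vfac_zero]
  have hz1 : ∀ i, k + 1 ≤ i → vdigit m k i = 0 := fun i hi =>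
    vdigit_eq_zero (lt_of_lt_of_le (lt_vM_self hm k) (vM_mono hm (by omega)))
  have hz2 : ∀ i, n ≤ i → vdigit m k i = 0 := fun i hi =>
    vdigit_eq_zero (lt_of_lt_of_le h (vM_mono hm hi))
  rw [vpsi_def]
  rcases le_total (k+1) n with hle | hle
  · exact key (k+1) n hle hz1
  · exact (key n (k+1) hle hz2).symm

lemma vpsi_eq_one (hm : ∀ k, 2 ≤ m k) {k n : ℕ} (h : k < vM m n) {t : VG m}
    (ht : t ∈ vI m n) : vpsi m k t = 1 := by
  rw [vpsi_eq_prod hm h]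
  apply Finset.prod_eq_one
  intro i hi
  have : ((t i : ℕ) : ℂ) = 0 := by exact_mod_cast congrArg Nat.cast (ht i (Finset.mem_range.mp hi))
  simp [vfac, this]

lemma norm_vfac (d i : ℕ) (x : VG m) : ‖vfac m d i x‖ = 1 := by
  have : (2 * Real.pi * Complex.I * (d : ℂ) * ((x i : ℕ) : ℂ) / (m i))
      = ((2 * Real.pi * d * ((x i : ℕ)) / (m i) : ℝ) : ℂ) * Complex.I := by
    push_cast; ring
  rw [vfac, this, Complex.norm_exp_ofReal_mul_I]

lemma norm_vpsi (k : ℕ) (x : VG m) : ‖vpsi m k x‖ = 1 := by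
  rw [vpsi_def, norm_prod]
  simp only [norm_vfac]
  simp

/-- Character sum at one coordinate. -/
lemma char_sum {M : ℕ} (hM : 0 < M) {a b : ℕ} (ha : a < M) (hb : b < M) :
    ∑ j ∈ Finset.range M, Complex.exp (2 * Real.pi * Complex.I * ((a : ℂ) - (b : ℂ)) / M) ^ j
      = if a = b then (M : ℂ) else 0 := by
  set z := Complex.exp (2 * Real.pi * Complex.I * ((a : ℂ) - (b : ℂ)) / M) with hz
  by_cases hab : a = b
  · simp [hz, hab]
  · have hMne : (M : ℂ) ≠ 0 := Nat.cast_ne_zero.mpr hM.ne'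
    have hz1 : z ≠ 1 := by
      intro hzz
      rw [hz, Complex.exp_eq_one_iff] at hzz
      obtain ⟨n, hn⟩ := hzz
      have hc : (2 * (Real.pi : ℂ) * Complex.I) ≠ 0 := by
        simp [Real.pi_ne_zero, Complex.I_ne_zero, Complex.ofReal_ne_zero]
      have h2 : ((a : ℂ) - b) = n * M := by
        have h := hn
        field_simp at h
        apply mul_left_cancel₀ hc
        rw [h]; ring
      have h3 : (a : ℝ) - b = n * M := by exact_mod_cast h2
      have hint : (a : ℤ) - b = n * M := by exact_mod_cast h3
      have h1' : (a : ℤ) < M := by exact_mod_cast ha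
      have h2' : (b : ℤ) < M := by exact_mod_cast hb
      have h3' : (0:ℤ) ≤ a := Int.ofNat_nonneg a
      have h4' : (0:ℤ) ≤ b := Int.ofNat_nonneg b
      have h5' : (a : ℤ) ≠ b := by exact_mod_cast hab
      have hM' : (0:ℤ) < M := by exact_mod_cast hM
      rcases lt_trichotomy n 0 with hn0 | hn0 | hn0
      · have : n * M ≤ -M := by nlinarith
        linarith [hint, h1', h2', h3', h4']
      · rw [hn0] at hint; simp at hint; omega
      · have : (M:ℤ) ≤ n * M := by nlinarith
        linarith [hint]
    rw [geom_sum_eq hz1]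
    have hzM : z ^ M = 1 := by
      rw [hz, ← Complex.exp_nat_mul]
      have : (M : ℂ) * (2 * Real.pi * Complex.I * ((a : ℂ) - (b : ℂ)) / M)
          = ((a : ℤ) - (b : ℤ) : ℂ) * (2 * Real.pi * Complex.I) := by
        push_cast; field_simp
      rw [this]
      exact_mod_cast Complex.exp_int_mul_two_pi_mul_I ((a : ℤ) - b)
    rw [hzM]
    simp [hab]

end VAux
namespace VAux
variable {m : ℕ → ℕ}

/-- ratio character base: `exp(2πI (u - v)/m i)`. -/
def vz (m : ℕ → ℕ) (u v : ℕ) (i : ℕ) : ℂ :=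
  Complex.exp (2 * Real.pi * Complex.I * ((u : ℂ) - (v : ℂ)) / (m i))

lemma vfac_mul_conj_vfac (d i : ℕ) (x t : VG m) :
    vfac m d i x * (starRingEnd ℂ) (vfac m d i t) = vz m (x i) (t i) i ^ d := by
  rw [vfac, vfac, ← Complex.exp_conj]
  have hconj : (starRingEnd ℂ) (2 * Real.pi * Complex.I * (d : ℂ) * ((t i : ℕ) : ℂ) / (m i))
      = -(2 * Real.pi * Complex.I * (d : ℂ) * ((t i : ℕ) : ℂ) / (m i)) := by
    simp [map_div₀, map_mul, Complex.conj_I, Complex.conj_ofReal, map_ofNat]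
    ring
  rw [hconj, ← Complex.exp_add, vz, ← Complex.exp_nat_mul]
  congr 1
  ring

lemma psi_mul_conj (hm : ∀ k, 2 ≤ m k) {k n : ℕ} (h : k < vM m n) (x t : VG m) :
    vpsi m k x * (starRingEnd ℂ) (vpsi m k t)
      = ∏ i ∈ Finset.range n, vz m (x i) (t i) i ^ (vdigit m k i) := by
  rw [vpsi_eq_prod hm h x, vpsi_eq_prod hm h t, map_prod, ← Finset.prod_mul_distrib]
  exact Finset.prod_congr rfl fun i _ => vfac_mul_conj_vfac _ i x t

lemma sum_prod_pow_digits (hm : ∀ k, 2 ≤ m k) (z : ℕ → ℂ) :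
    ∀ n : ℕ, ∑ k ∈ Finset.range (vM m n), ∏ i ∈ Finset.range n, (z i) ^ (vdigit m k i)
      = ∏ i ∈ Finset.range n, ∑ a ∈ Finset.range (m i), (z i) ^ a := by
  intro n
  induction n with
  | zero => simp [vM]
  | succ n ih =>
    have hMn : 0 < vM m n := vM_pos hm n
    have hsplit : ∑ k ∈ Finset.range (vM m (n+1)), ∏ i ∈ Finset.range (n+1), (z i) ^ (vdigit m k i)
        = ∑ p ∈ Finset.range (m n) ×ˢ Finset.range (vM m n),
            ∏ i ∈ Finset.range (n+1), (z i) ^ (vdigit m (p.1 * vM m n + p.2) i) := by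
      refine Finset.sum_nbij' (fun k => (k / vM m n, k % vM m n))
        (fun p => p.1 * vM m n + p.2) ?_ ?_ ?_ ?_ ?_
      · intro k hk
        rw [Finset.mem_range] at hk
        rw [vM_succ] at hk
        refine Finset.mem_product.mpr ⟨Finset.mem_range.mpr ?_, Finset.mem_range.mpr ?_⟩
        · exact Nat.div_lt_of_lt_mul (by rw [mul_comm]; exact hk)
        · exact Nat.mod_lt _ hMn
      · intro p hp
        rw [Finset.mem_product, Finset.mem_range, Finset.mem_range] at hp
        rw [Finset.mem_range, vM_succ]
        calc p.1 * vM m n + p.2 < p.1 * vM m n + vM m n := by omega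
          _ = (p.1 + 1) * vM m n := by ring
          _ ≤ m n * vM m n := Nat.mul_le_mul_right _ (by omega)
      · intro k hk
        simp only []
        rw [mul_comm]
        exact Nat.div_add_mod k _
      · intro p hp
        rw [Finset.mem_product, Finset.mem_range, Finset.mem_range] at hp
        have he : p.1 * vM m n + p.2 = p.2 + vM m n * p.1 := by ring
        have h1 : (p.1 * vM m n + p.2) / vM m n = p.1 := by
          rw [he, Nat.add_mul_div_left _ _ hMn, Nat.div_eq_of_lt hp.2, Nat.zero_add]
        have h2 : (p.1 * vM m n + p.2) % vM m n = p.2 := by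
          rw [he, Nat.add_mul_mod_self_left, Nat.mod_eq_of_lt hp.2]
        exact Prod.ext h1 h2
      · intro k hk
        congr 1
        rw [mul_comm, Nat.div_add_mod k _]
    rw [hsplit, Finset.sum_product]
    have hterm : ∀ a ∈ Finset.range (m n), ∀ r ∈ Finset.range (vM m n),
        ∏ i ∈ Finset.range (n+1), (z i) ^ (vdigit m (a * vM m n + r) i)
          = (∏ i ∈ Finset.range n, (z i) ^ (vdigit m r i)) * (z n) ^ a := by
      intro a ha r hr
      rw [Finset.mem_range] at ha hr
      rw [Finset.prod_range_succ]
      congr 1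
      · exact Finset.prod_congr rfl fun i hi =>
          congrArg _ (vdigit_add_mul_low hm hr (Finset.mem_range.mp hi))
      · rw [vdigit_add_mul_high hm hr, Nat.mod_eq_of_lt ha]
    calc ∑ a ∈ Finset.range (m n), ∑ r ∈ Finset.range (vM m n),
            ∏ i ∈ Finset.range (n+1), (z i) ^ (vdigit m (a * vM m n + r) i)
        = ∑ a ∈ Finset.range (m n), ∑ r ∈ Finset.range (vM m n),
            (∏ i ∈ Finset.range n, (z i) ^ (vdigit m r i)) * (z n) ^ a := by
          exact Finset.sum_congr rfl fun a ha => Finset.sum_congr rfl fun r hr => hterm a ha r hr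
      _ = (∑ r ∈ Finset.range (vM m n), ∏ i ∈ Finset.range n, (z i) ^ (vdigit m r i))
            * (∑ a ∈ Finset.range (m n), (z n) ^ a) := by
          rw [Finset.sum_comm]
          rw [← Finset.sum_mul_sum]
      _ = _ := by rw [ih, Finset.prod_range_succ]

lemma vM_cast_prod (n : ℕ) : ∏ i ∈ Finset.range n, (m i : ℂ) = (vM m n : ℂ) := by
  induction n with
  | zero => simp [vM]
  | succ n ihn => rw [Finset.prod_range_succ, ihn, vM_succ]; push_cast; ring

lemma kernel (hm : ∀ k, 2 ≤ m k) (n : ℕ) (x t : VG m) :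
    ∑ k ∈ Finset.range (vM m n), vpsi m k x * (starRingEnd ℂ) (vpsi m k t)
      = if (∀ i < n, x i = t i) then (vM m n : ℂ) else 0 := by
  have h1 : ∑ k ∈ Finset.range (vM m n), vpsi m k x * (starRingEnd ℂ) (vpsi m k t)
      = ∑ k ∈ Finset.range (vM m n), ∏ i ∈ Finset.range n, vz m (x i) (t i) i ^ (vdigit m k i) :=
    Finset.sum_congr rfl fun k hk => psi_mul_conj hm (Finset.mem_range.mp hk) x t
  rw [h1, sum_prod_pow_digits hm _ n]
  have h2 : ∀ i ∈ Finset.range n, ∑ a ∈ Finset.range (m i), vz m (x i) (t i) i ^ a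
      = if ((x i : ℕ) = (t i : ℕ)) then (m i : ℂ) else 0 := fun i _ =>
    char_sum (lt_of_lt_of_le two_pos (hm i)) (x i).isLt (t i).isLt
  rw [Finset.prod_congr rfl h2]
  by_cases hxt : ∀ i < n, x i = t i
  · rw [if_pos hxt]
    have : ∀ i ∈ Finset.range n, (if ((x i : ℕ) = (t i : ℕ)) then (m i : ℂ) else 0) = (m i : ℂ) :=
      fun i hi => if_pos (congrArg Fin.val (hxt i (Finset.mem_range.mp hi)))
    rw [Finset.prod_congr rfl this, vM_cast_prod]
  · rw [if_neg hxt]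
    push_neg at hxt
    obtain ⟨i0, hi0, hne⟩ := hxt
    exact Finset.prod_eq_zero (Finset.mem_range.mpr hi0)
      (by rw [if_neg (fun hc => hne (Fin.ext hc))])

end VAux
namespace VAux
variable {m : ℕ → ℕ}

lemma measurable_coord (i : ℕ) : Measurable (fun x : VG m => ((x i : ℕ) : ℂ)) := by
  have : (fun x : VG m => ((x i : ℕ) : ℂ))
      = (fun y : Fin (m i) => ((y : ℕ) : ℂ)) ∘ (fun x : VG m => x i) := rfl
  rw [this]
  exact measurable_from_top.comp (measurable_pi_apply i)

lemma measurable_vfac (d i : ℕ) : Measurable (fun x : VG m => vfac m d i x) := by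
  unfold vfac
  apply Measurable.comp Complex.measurable_exp
  apply Measurable.div_const
  exact Measurable.mul (measurable_const) (measurable_coord i)

lemma measurable_vpsi (k : ℕ) : Measurable (fun x : VG m => vpsi m k x) := by
  simp only [vpsi_def]
  exact Finset.measurable_prod _ fun i _ => measurable_vfac _ _

lemma measurableSet_vCyl (n : ℕ) (x : VG m) : MeasurableSet (vCyl m n x) := by
  have : vCyl m n x = ⋂ i ∈ Finset.range n, (fun y : VG m => y i) ⁻¹' {x i} := by
    ext y
    simp [vCyl, Set.mem_iInter]
  rw [this]
  exact MeasurableSet.biInter (Finset.range n).countable_toSet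
    (fun i _ => (measurable_pi_apply i) (MeasurableSet.singleton (x i)))

/-- the zero point of the group -/
def zeroG (hm : ∀ k, 2 ≤ m k) : VG m := fun i => ⟨0, lt_of_lt_of_le two_pos (hm i)⟩

lemma zeroG_mem_vI (hm : ∀ k, 2 ≤ m k) (n : ℕ) : zeroG hm ∈ vI m n := fun i _ => rfl

lemma vI_eq_vCyl (hm : ∀ k, 2 ≤ m k) (n : ℕ) : vI m n = vCyl m n (zeroG hm) := by
  ext y
  constructor
  · intro hy i hi; exact Fin.ext (hy i hi)
  · intro hy i hi; exact congrArg Fin.val (hy i hi)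

lemma measurableSet_vI (hm : ∀ k, 2 ≤ m k) (n : ℕ) : MeasurableSet (vI m n) := by
  rw [vI_eq_vCyl hm]; exact measurableSet_vCyl n _

/-- extension of a finite tuple to a point of the group -/
def extPt (hm : ∀ k, 2 ≤ m k) (n : ℕ) (v : (i : Fin n) → Fin (m i)) : VG m :=
  fun i => if h : i < n then v ⟨i, h⟩ else ⟨0, lt_of_lt_of_le two_pos (hm i)⟩

lemma integral_prod_coord (hm : ∀ k, 2 ≤ m k) (μ : Measure (VG m)) [IsProbabilityMeasure μ]
    (hμ : isVHaar μ) (n : ℕ) (F : ℕ → ℕ → ℂ) :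
    (Integrable (fun t : VG m => ∏ i ∈ Finset.range n, F i ((t i : ℕ))) μ) ∧
    ∫ t, ∏ i ∈ Finset.range n, F i ((t i : ℕ)) ∂μ
      = ((vM m n : ℂ))⁻¹ * ∏ i ∈ Finset.range n, ∑ a ∈ Finset.range (m i), F i a := by
  classical
  set C : ((i : Fin n) → Fin (m i)) → Set (VG m) := fun v => vCyl m n (extPt hm n v) with hC
  have hmemC : ∀ (t : VG m) (v : (i : Fin n) → Fin (m i)),
      t ∈ C v ↔ v = fun i : Fin n => t i := by
    intro t v
    constructor
    · intro ht
      funext i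
      have := ht i i.isLt
      rw [this]
      simp [extPt, i.isLt]
    · intro hv
      intro i hi
      rw [hv]
      simp [extPt, hi]
  have hrepr : (fun t : VG m => ∏ i ∈ Finset.range n, F i ((t i : ℕ)))
      = fun t => ∑ v : (i : Fin n) → Fin (m i),
          Set.indicator (C v) (fun _ => ∏ i : Fin n, F i ((v i : ℕ))) t := by
    funext t
    rw [Finset.sum_eq_single (fun i : Fin n => t i)]
    · rw [Set.indicator_of_mem ((hmemC t _).mpr rfl)]
      exact (Finset.prod_range fun i => F i ((t i : ℕ)))
    · intro v _ hv
      exact Set.indicator_of_notMem (fun hc => hv ((hmemC t v).mp hc)) _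
    · intro h; exact absurd (Finset.mem_univ _) h
  have hint : ∀ v : (i : Fin n) → Fin (m i),
      Integrable (Set.indicator (C v) (fun _ => ∏ i : Fin n, F i ((v i : ℕ)))) μ :=
    fun v => (integrable_const _).indicator (measurableSet_vCyl n _)
  constructor
  · rw [hrepr]
    exact integrable_finset_sum _ fun v _ => hint v
  · rw [hrepr, integral_finset_sum _ fun v _ => hint v]
    have hval : ∀ v : (i : Fin n) → Fin (m i),
        ∫ t, Set.indicator (C v) (fun _ => ∏ i : Fin n, F i ((v i : ℕ))) t ∂μ
          = ((vM m n : ℝ))⁻¹ • ∏ i : Fin n, F i ((v i : ℕ)) := by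
      intro v
      rw [integral_indicator_const _ (measurableSet_vCyl n _)]
      congr 1
      rw [measureReal_def, hμ n _]
      simp [ENNReal.toReal_inv]
    rw [Finset.sum_congr rfl fun v _ => hval v, ← Finset.smul_sum]
    have : ∑ v : (i : Fin n) → Fin (m i), ∏ i : Fin n, F i ((v i : ℕ))
        = ∏ i ∈ Finset.range n, ∑ a ∈ Finset.range (m i), F i a := by
      have h2 : ∏ i ∈ Finset.range n, ∑ a ∈ Finset.range (m i), F i a
          = ∏ i : Fin n, ∑ a : Fin (m (i : ℕ)), F i ((a : ℕ)) := by
        rw [Finset.prod_range]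
        exact Finset.prod_congr rfl fun i _ =>
          (Fin.sum_univ_eq_sum_range (fun a => F i a) (m i)).symm
      rw [h2, Finset.prod_univ_sum, Fintype.piFinset_univ]
    rw [this]
    rw [Complex.real_smul]
    push_cast
    ring
end VAux
namespace VAux
variable {m : ℕ → ℕ}

lemma vfac_mul_conj_vfac' (d e i : ℕ) (t : VG m) :
    vfac m d i t * (starRingEnd ℂ) (vfac m e i t) = vz m d e i ^ ((t i : ℕ)) := by
  rw [vfac, vfac, ← Complex.exp_conj]
  have hconj : (starRingEnd ℂ) (2 * Real.pi * Complex.I * (e : ℂ) * ((t i : ℕ) : ℂ) / (m i))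
      = -(2 * Real.pi * Complex.I * (e : ℂ) * ((t i : ℕ) : ℂ) / (m i)) := by
    simp [map_div₀, map_mul, Complex.conj_I, Complex.conj_ofReal, map_ofNat]
    ring
  rw [hconj, ← Complex.exp_add, vz, ← Complex.exp_nat_mul]
  congr 1
  ring

lemma psi_mul_conj_psi (hm : ∀ k, 2 ≤ m k) {a j n : ℕ} (ha : a < vM m n) (hj : j < vM m n)
    (t : VG m) : vpsi m a t * (starRingEnd ℂ) (vpsi m j t)
      = ∏ i ∈ Finset.range n, (vz m (vdigit m a i) (vdigit m j i) i) ^ ((t i : ℕ)) := by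
  rw [vpsi_eq_prod hm ha t, vpsi_eq_prod hm hj t, map_prod, ← Finset.prod_mul_distrib]
  exact Finset.prod_congr rfl fun i _ => vfac_mul_conj_vfac' _ _ i t

lemma integrable_psi_mul_conj (hm : ∀ k, 2 ≤ m k) (μ : Measure (VG m))
    [IsProbabilityMeasure μ] (hμ : isVHaar μ) {a j n : ℕ} (ha : a < vM m n) (hj : j < vM m n) :
    Integrable (fun t => vpsi m a t * (starRingEnd ℂ) (vpsi m j t)) μ := by
  have := (integral_prod_coord hm μ hμ n
    (fun i b => (vz m (vdigit m a i) (vdigit m j i) i) ^ b)).1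
  refine this.congr ?_
  exact Filter.Eventually.of_forall fun t => (psi_mul_conj_psi hm ha hj t).symm

lemma integral_psi_mul_conj (hm : ∀ k, 2 ≤ m k) (μ : Measure (VG m))
    [IsProbabilityMeasure μ] (hμ : isVHaar μ) {a j n : ℕ} (ha : a < vM m n) (hj : j < vM m n) :
    ∫ t, vpsi m a t * (starRingEnd ℂ) (vpsi m j t) ∂μ = if a = j then 1 else 0 := by
  have heq : (fun t : VG m => vpsi m a t * (starRingEnd ℂ) (vpsi m j t))
      = fun t => ∏ i ∈ Finset.range n,
          (fun i b => (vz m (vdigit m a i) (vdigit m j i) i) ^ b) i ((t i : ℕ)) := by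
    funext t; exact psi_mul_conj_psi hm ha hj t
  rw [heq, (integral_prod_coord hm μ hμ n _).2]
  have hz : ∀ i ∈ Finset.range n,
      ∑ b ∈ Finset.range (m i), (vz m (vdigit m a i) (vdigit m j i) i) ^ b
        = if vdigit m a i = vdigit m j i then (m i : ℂ) else 0 := fun i _ =>
    char_sum (lt_of_lt_of_le two_pos (hm i)) (vdigit_lt hm a i) (vdigit_lt hm j i)
  rw [Finset.prod_congr rfl hz]
  by_cases hd : ∀ i < n, vdigit m a i = vdigit m j i
  · have haj : a = j := vdigit_inj hm ha hj hd
    rw [if_pos haj]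
    have : ∀ i ∈ Finset.range n,
        (if vdigit m a i = vdigit m j i then (m i : ℂ) else 0) = (m i : ℂ) :=
      fun i hi => if_pos (hd i (Finset.mem_range.mp hi))
    rw [Finset.prod_congr rfl this, vM_cast_prod]
    have : (vM m n : ℂ) ≠ 0 := Nat.cast_ne_zero.mpr (vM_pos hm n).ne'
    field_simp
  · push_neg at hd
    obtain ⟨i0, hi0, hne⟩ := hd
    have haj : a ≠ j := fun hc => hne (by rw [hc])
    rw [if_neg haj, Finset.prod_eq_zero (Finset.mem_range.mpr hi0)
      (show (if vdigit m a i0 = vdigit m j i0 then ((m i0 : ℂ)) else 0) = 0 from if_neg hne),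
      mul_zero]

/-- The function `f_A`. -/
def fA (m : ℕ → ℕ) (A : ℕ) : VG m → ℂ :=
  fun y => vD m (vM m (A + 1)) y - vD m (vM m A) y

lemma fA_eq (hm : ∀ k, 2 ≤ m k) (A : ℕ) :
    fA m A = fun y => ∑ k ∈ Finset.Ico (vM m A) (vM m (A+1)), vpsi m k y := by
  funext y
  rw [fA, vD, vD, Finset.sum_Ico_eq_sub _ (vM_mono hm (Nat.le_succ A))]

lemma vCoeff_fA (hm : ∀ k, 2 ≤ m k) (μ : Measure (VG m)) [IsProbabilityMeasure μ]
    (hμ : isVHaar μ) (A : ℕ) {j : ℕ} (hj : j < vM m (A+1)) :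
    vCoeff μ (fA m A) j = if vM m A ≤ j then 1 else 0 := by
  rw [vCoeff]
  have heq : (fun t : VG m => fA m A t * (starRingEnd ℂ) (vpsi m j t))
      = fun t => ∑ k ∈ Finset.Ico (vM m A) (vM m (A+1)),
          vpsi m k t * (starRingEnd ℂ) (vpsi m j t) := by
    funext t
    rw [fA_eq hm, Finset.sum_mul]
  rw [heq, integral_finset_sum _ fun k hk => integrable_psi_mul_conj hm μ hμ
    (Finset.mem_Ico.mp hk).2 hj]
  have : ∀ k ∈ Finset.Ico (vM m A) (vM m (A+1)),
      ∫ t, vpsi m k t * (starRingEnd ℂ) (vpsi m j t) ∂μ = if k = j then 1 else 0 :=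
    fun k hk => integral_psi_mul_conj hm μ hμ (Finset.mem_Ico.mp hk).2 hj
  rw [Finset.sum_congr rfl this, Finset.sum_ite_eq' _ j (fun _ => (1:ℂ))]
  simp only [Finset.mem_Ico]
  by_cases h : vM m A ≤ j
  · rw [if_pos ⟨h, hj⟩, if_pos h]
  · rw [if_neg (fun hc => h hc.1), if_neg h]

end VAux
namespace VAux
variable {m : ℕ → ℕ}

lemma vS_fA_on_vI (hm : ∀ k, 2 ≤ m k) (μ : Measure (VG m)) [IsProbabilityMeasure μ]
    (hμ : isVHaar μ) (A : ℕ) {k : ℕ} (hk : k ≤ vM m (A+1)) {t : VG m} (ht : t ∈ vI m (A+1)) :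
    vS μ (fA m A) k t = ((k - vM m A : ℕ) : ℂ) := by
  rw [vS]
  have hterm : ∀ j ∈ Finset.range k, vCoeff μ (fA m A) j * vpsi m j t
      = if vM m A ≤ j then 1 else 0 := by
    intro j hj
    have hjlt : j < vM m (A+1) := lt_of_lt_of_le (Finset.mem_range.mp hj) hk
    rw [vCoeff_fA hm μ hμ A hjlt, vpsi_eq_one hm hjlt ht, mul_one]
  rw [Finset.sum_congr rfl hterm, Finset.sum_boole]
  have hfilter : (Finset.range k).filter (fun j => vM m A ≤ j) = Finset.Ico (vM m A) k := by
    ext j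
    simp [Finset.mem_Ico, Finset.mem_filter, Finset.mem_range]
    omega
  rw [hfilter, Nat.card_Ico]

lemma gauss_Icc (T : ℕ) : (∑ j ∈ Finset.Icc 1 T, j) * 2 = T * (T + 1) := by
  have h1 : Finset.range (T+1) = insert 0 (Finset.Icc 1 T) := by
    ext j
    simp [Finset.mem_range, Finset.mem_Icc]
    omega
  have h2 := Finset.sum_range_id_mul_two (T+1)
  rw [h1, Finset.sum_insert (by simp)] at h2
  rw [Nat.mul_comm T (T+1)]
  simpa using h2

lemma Ssum_lower (hm : ∀ k, 2 ≤ m k) (A : ℕ) :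
    vM m A * vM m (A+1) ≤ 4 * ∑ k ∈ Finset.Icc 1 (vM m (A+1)), (k - vM m A) := by
  set MA := vM m A with hMA
  set MA1 := vM m (A+1) with hMA1
  have hMApos : 0 < MA := vM_pos hm A
  have h2MA : 2 * MA ≤ MA1 := by
    rw [hMA1, vM_succ]
    exact Nat.mul_le_mul_right _ (hm A)
  set T := MA1 - MA with hT
  have hsub : ∑ k ∈ Finset.Icc (MA+1) MA1, (k - MA)
      ≤ ∑ k ∈ Finset.Icc 1 MA1, (k - MA) :=
    Finset.sum_le_sum_of_subset (Finset.Icc_subset_Icc (by omega) le_rfl)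
  have hre : ∑ k ∈ Finset.Icc (MA+1) MA1, (k - MA) = ∑ j ∈ Finset.Icc 1 T, j := by
    refine Finset.sum_nbij' (fun k => k - MA) (fun j => j + MA) ?_ ?_ ?_ ?_ ?_
    · intro k hk; simp only [Finset.mem_Icc] at hk ⊢; omega
    · intro j hj; simp only [Finset.mem_Icc] at hj ⊢; omega
    · intro k hk; simp only [Finset.mem_Icc] at hk; omega
    · intro j hj; simp only [Finset.mem_Icc] at hj; omega
    · intro k hk; rfl
  have hg := gauss_Icc T
  have hTMA : MA ≤ T := by omega
  have hM2T : MA1 ≤ 2 * T := by omega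
  have h4 : MA * MA1 ≤ 2 * (T * (T + 1)) := by nlinarith [Nat.mul_le_mul hTMA hM2T]
  linarith [h4, hg, hsub, hre]

lemma abs_vSigma_lower (hm : ∀ k, 2 ≤ m k) (μ : Measure (VG m)) [IsProbabilityMeasure μ]
    (hμ : isVHaar μ) (A : ℕ) {t : VG m} (ht : t ∈ vI m (A+1)) :
    (vM m A : ℝ) / 4 ≤ ‖vSigma μ (fA m A) (vM m (A+1)) t‖ := by
  set MA := vM m A
  set MA1 := vM m (A+1)
  set Ssum : ℕ := ∑ k ∈ Finset.Icc 1 MA1, (k - MA) with hSsum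
  have hMA1pos : 0 < MA1 := vM_pos hm (A+1)
  have hσ : vSigma μ (fA m A) MA1 t = (((MA1 : ℝ))⁻¹ * (Ssum : ℝ) : ℝ) := by
    rw [vSigma]
    have : ∀ k ∈ Finset.Icc 1 MA1, vS μ (fA m A) k t = ((k - MA : ℕ) : ℂ) :=
      fun k hk => vS_fA_on_vI hm μ hμ A (Finset.mem_Icc.mp hk).2 ht
    rw [Finset.sum_congr rfl this, hSsum]
    push_cast
    ring
  rw [hσ, Complex.norm_real, Real.norm_eq_abs, _root_.abs_of_nonneg (by positivity)]
  have hkey := Ssum_lower hm A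
  have h1 : (MA : ℝ) * MA1 ≤ 4 * Ssum := by exact_mod_cast hkey
  rw [div_le_iff₀ (by norm_num : (0:ℝ) < 4), inv_mul_eq_div, div_mul_eq_mul_div,
    le_div_iff₀ (by exact_mod_cast hMA1pos : (0:ℝ) < (MA1:ℝ))]
  linarith [h1]

lemma measurable_vSigma (μ : Measure (VG m)) (f : VG m → ℂ) (n : ℕ) :
    Measurable (fun t => vSigma μ f n t) := by
  unfold vSigma vS
  apply Measurable.const_mul
  apply Finset.measurable_sum
  intro k _
  apply Finset.measurable_sum
  intro j _
  exact (measurable_vpsi j).const_mul _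

lemma norm_vSigma_le (μ : Measure (VG m)) (f : VG m → ℂ) (n : ℕ) (t : VG m) :
    ‖vSigma μ f n t‖ ≤ ∑ k ∈ Finset.Icc 1 n, ∑ j ∈ Finset.range k, ‖vCoeff μ f j‖ := by
  rw [vSigma, norm_mul]
  have h1 : ‖((n : ℂ))⁻¹‖ ≤ 1 := by
    rcases Nat.eq_zero_or_pos n with h | h
    · simp [h]
    · rw [norm_inv, Complex.norm_natCast]
      rw [inv_le_one_iff₀]
      right
      exact_mod_cast h
  calc ‖((n:ℂ))⁻¹‖ * ‖∑ k ∈ Finset.Icc 1 n, vS μ f k t‖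
      ≤ 1 * ‖∑ k ∈ Finset.Icc 1 n, vS μ f k t‖ := by
        apply mul_le_mul_of_nonneg_right h1 (norm_nonneg _)
    _ = ‖∑ k ∈ Finset.Icc 1 n, vS μ f k t‖ := one_mul _
    _ ≤ ∑ k ∈ Finset.Icc 1 n, ‖vS μ f k t‖ := norm_sum_le _ _
    _ ≤ ∑ k ∈ Finset.Icc 1 n, ∑ j ∈ Finset.range k, ‖vCoeff μ f j‖ := by
        apply Finset.sum_le_sum
        intro k _
        calc ‖vS μ f k t‖ ≤ ∑ j ∈ Finset.range k, ‖vCoeff μ f j * vpsi m j t‖ := norm_sum_le _ _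
          _ = ∑ j ∈ Finset.range k, ‖vCoeff μ f j‖ := by
              apply Finset.sum_congr rfl
              intro j _
              rw [norm_mul, norm_vpsi, mul_one]

lemma sigAbsFA_eq (μ : Measure (VG m)) (A : ℕ) :
    sigAbsFA μ A = fun t => ((‖vSigma μ (fA m A) (vM m (A+1)) t‖ : ℝ) : ℂ) := rfl

lemma measurable_sigAbsFA (μ : Measure (VG m)) (A : ℕ) : Measurable (sigAbsFA μ A) := by
  rw [sigAbsFA_eq]
  have h1 : Measurable (fun t => vSigma μ (fA m A) (vM m (A+1)) t) := measurable_vSigma μ _ _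
  have h2 : Measurable (fun t => ‖vSigma μ (fA m A) (vM m (A+1)) t‖) := by
    exact h1.norm
  exact Complex.measurable_ofReal.comp h2

lemma norm_sigAbsFA_le (μ : Measure (VG m)) (A : ℕ) (t : VG m) :
    ‖sigAbsFA μ A t‖ ≤ ∑ k ∈ Finset.Icc 1 (vM m (A+1)), ∑ j ∈ Finset.range k,
      ‖vCoeff μ (fA m A) j‖ := by
  rw [sigAbsFA_eq]
  rw [Complex.norm_real, Real.norm_eq_abs, _root_.abs_of_nonneg (norm_nonneg _)]
  exact norm_vSigma_le μ _ _ t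

lemma integrable_sigAbsFA (μ : Measure (VG m)) [IsProbabilityMeasure μ] (A : ℕ) :
    Integrable (sigAbsFA μ A) μ := by
  apply Integrable.mono' (integrable_const (∑ k ∈ Finset.Icc 1 (vM m (A+1)),
    ∑ j ∈ Finset.range k, ‖vCoeff μ (fA m A) j‖))
    (measurable_sigAbsFA μ A).aestronglyMeasurable
  exact Filter.Eventually.of_forall fun t => norm_sigAbsFA_le μ A t

end VAux
namespace VAux
variable {m : ℕ → ℕ}

lemma vD_eq (hm : ∀ k, 2 ≤ m k) (N : ℕ) (x : VG m) :
    vD m (vM m N) x = if x ∈ vI m N then (vM m N : ℂ) else 0 := by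
  have h1 : ∀ k ∈ Finset.range (vM m N), vpsi m k x
      = vpsi m k x * (starRingEnd ℂ) (vpsi m k (zeroG hm)) := by
    intro k hk
    rw [vpsi_eq_one hm (Finset.mem_range.mp hk) (zeroG_mem_vI hm N), map_one, mul_one]
  rw [vD, Finset.sum_congr rfl h1, kernel hm N x (zeroG hm)]
  congr 1
  simp only [eq_iff_iff]
  constructor
  · intro h i hi; exact congrArg Fin.val (h i hi)
  · intro h i hi; exact Fin.ext (h i hi)

lemma vS_sig_re (hm : ∀ k, 2 ≤ m k) (μ : Measure (VG m)) [IsProbabilityMeasure μ]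
    (hμ : isVHaar μ) (A N : ℕ) (x : VG m) :
    (vS μ (sigAbsFA μ A) (vM m N) x).re = (vM m N : ℝ) *
      ∫ t in vCyl m N x, ‖vSigma μ (fA m A) (vM m (A+1)) t‖ ∂μ := by
  set g := sigAbsFA μ A with hg
  set gr : VG m → ℝ := fun t => ‖vSigma μ (fA m A) (vM m (A+1)) t‖ with hgr
  have hgr_eq : ∀ t, g t = ((gr t : ℝ) : ℂ) := fun t => rfl
  have hint : ∀ j : ℕ, Integrable
      (fun t => vpsi m j x * (starRingEnd ℂ) (vpsi m j t) * g t) μ := by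
    intro j
    apply (integrable_sigAbsFA μ A).bdd_mul (c := 1)
    · exact (((Complex.continuous_conj).measurable.comp
        (measurable_vpsi j)).const_mul _).aestronglyMeasurable
    · refine Filter.Eventually.of_forall fun t => ?_
      rw [norm_mul, RCLike.norm_conj, norm_vpsi, norm_vpsi, mul_one]
  have step1 : vS μ g (vM m N) x
      = ∫ t, ∑ j ∈ Finset.range (vM m N),
          vpsi m j x * (starRingEnd ℂ) (vpsi m j t) * g t ∂μ := by
    rw [vS, integral_finset_sum _ fun j _ => hint j]
    apply Finset.sum_congr rfl
    intro j _
    rw [vCoeff, mul_comm]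
    rw [← integral_const_mul]
    apply integral_congr_ae
    apply Filter.Eventually.of_forall
    intro t
    ring
  have step2 : (fun t => ∑ j ∈ Finset.range (vM m N),
        vpsi m j x * (starRingEnd ℂ) (vpsi m j t) * g t)
      = Set.indicator (vCyl m N x) (fun t => (vM m N : ℂ) * g t) := by
    funext t
    rw [← Finset.sum_mul, kernel hm N x t]
    rw [Set.indicator_apply]
    have hmem : (t ∈ vCyl m N x) ↔ (∀ i < N, x i = t i) := by
      constructor
      · intro h i hi; exact (h i hi).symm
      · intro h i hi; exact (h i hi).symm
    by_cases hc : ∀ i < N, x i = t i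
    · rw [if_pos hc, if_pos (hmem.mpr hc)]
    · rw [if_neg hc, if_neg (fun hmem' => hc (hmem.mp hmem')), zero_mul]
  rw [step1, step2, integral_indicator (measurableSet_vCyl N x), integral_const_mul]
  have : ∫ t in vCyl m N x, g t ∂μ = ((∫ t in vCyl m N x, gr t ∂μ : ℝ) : ℂ) := by
    rw [show (fun t => g t) = fun t => ((gr t : ℝ) : ℂ) from funext hgr_eq]
    exact integral_ofReal
  rw [this]
  simp

theorem main (m : ℕ → ℕ) (hm : ∀ k, 2 ≤ m k) (hb : ∃ B, ∀ k, m k ≤ B)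
    (μ : Measure (VG m)) [IsProbabilityMeasure μ] (hμ : isVHaar μ) :
    ∃ c : ℝ, 0 < c ∧ ∀ A N : ℕ, N ≤ A → ∀ x : VG m,
      c * (vD m (vM m N) x).re ≤ (vS μ (sigAbsFA μ A) (vM m N) x).re := by
  obtain ⟨B, hB⟩ := hb
  have hB2 : 2 ≤ B := le_trans (hm 0) (hB 0)
  have hBpos : (0:ℝ) < B := by positivity
  refine ⟨((4:ℝ) * B)⁻¹, by positivity, ?_⟩
  intro A N hNA x
  set MA := vM m A with hMA
  set MA1 := vM m (A+1) with hMA1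
  set Mn := vM m N with hMn
  have hMApos : 0 < MA := vM_pos hm A
  have hMA1pos : 0 < MA1 := vM_pos hm (A+1)
  have hMnpos : 0 < Mn := vM_pos hm N
  set gr : VG m → ℝ := fun t => ‖vSigma μ (fA m A) MA1 t‖ with hgr
  have hgr_int : Integrable gr μ := by
    have := (integrable_sigAbsFA μ A).re
    refine this.congr (Filter.Eventually.of_forall fun t => ?_)
    rw [sigAbsFA_eq]
    simp [hgr, hMA1]
  have hgr_nonneg : ∀ t, 0 ≤ gr t := fun t => norm_nonneg _
  rw [vS_sig_re hm μ hμ A N x, vD_eq hm N x]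
  by_cases hx : x ∈ vI m N
  · rw [if_pos hx]
    simp only [Complex.natCast_re]
    have hsub : vI m (A+1) ⊆ vCyl m N x := by
      intro y hy i hi
      have hiA : i < A + 1 := by omega
      exact Fin.ext (by rw [hy i hiA, hx i hi])
    have hstep1 : ∫ t in vI m (A+1), gr t ∂μ ≤ ∫ t in vCyl m N x, gr t ∂μ := by
      apply setIntegral_mono_set hgr_int.integrableOn
        (Filter.Eventually.of_forall fun t => hgr_nonneg t)
        (HasSubset.Subset.eventuallyLE hsub)
    have hμI : μ.real (vI m (A+1)) = ((MA1 : ℝ))⁻¹ := by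
      rw [measureReal_def, vI_eq_vCyl hm, hμ (A+1) _]
      simp [ENNReal.toReal_inv, hMA1]
    have hstep2 : ((MA1:ℝ))⁻¹ * ((MA:ℝ)/4) ≤ ∫ t in vI m (A+1), gr t ∂μ := by
      have := setIntegral_mono_on (f := fun _ => (MA:ℝ)/4) (g := gr)
        ((integrable_const _).integrableOn) hgr_int.integrableOn
        (measurableSet_vI hm (A+1))
        (fun t ht => abs_vSigma_lower hm μ hμ A ht)
      rw [setIntegral_const, hμI] at this
      simpa using this
    have hc_le : ((4:ℝ) * B)⁻¹ ≤ ((MA1:ℝ))⁻¹ * ((MA:ℝ)/4) := by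
      have hBMA : (MA1:ℝ) ≤ B * MA := by
        have : MA1 ≤ B * MA := by
          rw [hMA1, vM_succ]
          exact Nat.mul_le_mul_right _ (hB A)
        exact_mod_cast this
      rw [inv_mul_eq_div, div_div, inv_eq_one_div,
        div_le_div_iff₀ (by positivity) (by positivity)]
      nlinarith [hBMA, hMApos, hMA1pos]
    calc ((4:ℝ)*B)⁻¹ * (Mn:ℝ) = (Mn:ℝ) * ((4:ℝ)*B)⁻¹ := by ring
      _ ≤ (Mn:ℝ) * (((MA1:ℝ))⁻¹ * ((MA:ℝ)/4)) := by
          exact mul_le_mul_of_nonneg_left hc_le (by positivity)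
      _ ≤ (Mn:ℝ) * ∫ t in vCyl m N x, gr t ∂μ := by
          exact mul_le_mul_of_nonneg_left (le_trans hstep2 hstep1) (by positivity)
  · rw [if_neg hx]
    simp only [Complex.zero_re, mul_zero]
    have : 0 ≤ ∫ t in vCyl m N x, gr t ∂μ :=
      setIntegral_nonneg (measurableSet_vCyl N x) (fun t _ => hgr_nonneg t)
    positivity

end VAux

/-- `S_{M_N}(|σ_{M_{A+1}} f_A|)(x) ≥ c D_{M_N}(x)` for `N ≤ A`. -/
theorem SMN_of_abs_sigma_lower (m : ℕ → ℕ) (hm : ∀ k, 2 ≤ m k) (hb : ∃ B, ∀ k, m k ≤ B)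
    (μ : Measure (VG m)) [IsProbabilityMeasure μ] (hμ : isVHaar μ) :
    ∃ c : ℝ, 0 < c ∧ ∀ A N : ℕ, N ≤ A → ∀ x : VG m,
      c * (vD m (vM m N) x).re ≤ (vS μ (sigAbsFA μ A) (vM m N) x).re :=
  VAux.main m hm hb μ hμ

end
end

section
/- For 0 < p < 1, the ratio \| \sup_{N} S_{M_N}(|\sigma_{M_{A+1}} f_A|) \|_p / \|f_A\|_{H_p} \geq c_p M_A^{1/p - 1} \to \infty as A \to \infty, where f_A = D_{M_{A+1}} - D_{M_A}. Consequently the operator f \mapsto |\sigma_{M_n} f| is not bounded from H_p(G_m) to H_p(G_m) for 0 < p < 1. -/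
open MeasureTheory Complex Filter
open scoped Classical
open scoped ENNReal NNReal

noncomputable section

variable {m : ℕ → ℕ}

lemma vM_succ (n : ℕ) : vM m (n + 1) = m n * vM m n := rfl

lemma vM_pos (hm : ∀ k, 2 ≤ m k) (n : ℕ) : 0 < vM m n := by
  induction n with
  | zero => exact Nat.one_pos
  | succ n ih => exact Nat.mul_pos (lt_of_lt_of_le Nat.zero_lt_two (hm n)) ih

lemma two_pow_le_vM (hm : ∀ k, 2 ≤ m k) (n : ℕ) : 2 ^ n ≤ vM m n := by
  induction n with
  | zero => simp [vM]
  | succ n ih =>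
    rw [pow_succ, vM_succ, mul_comm (m n)]
    exact Nat.mul_le_mul ih (hm n)

lemma lt_vM (hm : ∀ k, 2 ≤ m k) (n : ℕ) : n < vM m n :=
  lt_of_lt_of_le (Nat.lt_two_pow_self (n := n)) (two_pow_le_vM hm n)

lemma vM_dvd (hm : ∀ k, 2 ≤ m k) {k n : ℕ} (h : k ≤ n) : vM m k ∣ vM m n := by
  induction n with
  | zero => simp_all
  | succ n ih =>
    rcases Nat.lt_or_ge k (n+1) with h' | h'
    · exact dvd_mul_of_dvd_right (ih (Nat.lt_succ_iff.mp h')) _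
    · have : k = n + 1 := le_antisymm h h'
      subst this; rfl

lemma vM_mono (hm : ∀ k, 2 ≤ m k) {k n : ℕ} (h : k ≤ n) : vM m k ≤ vM m n :=
  Nat.le_of_dvd (vM_pos hm n) (vM_dvd hm h)

lemma vdigit_lt (hm : ∀ k, 2 ≤ m k) (t k : ℕ) : vdigit m t k < m k :=
  Nat.mod_lt _ (lt_of_lt_of_le Nat.zero_lt_two (hm k))

lemma vdigit_eq_zero {t k : ℕ} (h : t < vM m k) : vdigit m t k = 0 := by
  unfold vdigit
  rw [Nat.div_eq_of_lt h, Nat.zero_mod]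

lemma vdigit_mul_add_of_lt (hm : ∀ k, 2 ≤ m k) {k n : ℕ} (hk : k < n) (a r : ℕ) :
    vdigit m (a * vM m n + r) k = vdigit m r k := by
  obtain ⟨c, hc⟩ := vM_dvd hm (Nat.succ_le_of_lt hk)
  have hMk : 0 < vM m k := vM_pos hm k
  unfold vdigit
  have : a * vM m n + r = r + vM m k * (a * (m k * c)) := by
    rw [hc, vM_succ]; ring
  rw [this, Nat.add_mul_div_left _ _ hMk]
  have : a * (m k * c) = m k * (a * c) := by ring
  rw [this, Nat.add_mul_mod_self_left]

lemma vdigit_mul_add_self (hm : ∀ k, 2 ≤ m k) {n a r : ℕ} (hr : r < vM m n) (ha : a < m n) :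
    vdigit m (a * vM m n + r) n = a := by
  unfold vdigit
  rw [add_comm, mul_comm, Nat.add_mul_div_left _ _ (vM_pos hm n), Nat.div_eq_of_lt hr, zero_add,
    Nat.mod_eq_of_lt ha]

lemma vdigit_sum (hm : ∀ k, 2 ≤ m k) {n t : ℕ} (h : t < vM m n) :
    ∑ i ∈ Finset.range n, vdigit m t i * vM m i = t := by
  induction n generalizing t with
  | zero => simpa [vM] using (Nat.lt_one_iff.mp h).symm
  | succ n ih =>
    have ht : t = (t / vM m n) * vM m n + t % vM m n := by
      rw [mul_comm]; exact (Nat.div_add_mod t (vM m n)).symm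
    have hr : t % vM m n < vM m n := Nat.mod_lt _ (vM_pos hm n)
    have ha : t / vM m n < m n := by
      rw [Nat.div_lt_iff_lt_mul (vM_pos hm n), mul_comm]
      rw [vM_succ, mul_comm] at h; exact h
    rw [Finset.sum_range_succ]
    have h1 : ∀ i ∈ Finset.range n, vdigit m t i * vM m i = vdigit m (t % vM m n) i * vM m i := by
      intro i hi
      rw [Finset.mem_range] at hi
      conv_lhs => rw [ht, vdigit_mul_add_of_lt hm hi]
    rw [Finset.sum_congr rfl h1, ih hr]
    conv_lhs => rw [show vdigit m t n = t / vM m n by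
      conv_lhs => rw [ht]
      exact vdigit_mul_add_self hm hr ha]
    omega

def vE (m : ℕ → ℕ) (d : ℕ) (k : ℕ) (x : VG m) : ℂ :=
  Complex.exp (2 * Real.pi * Complex.I * (d : ℂ) * ((x k : ℕ) : ℂ) / (m k))

lemma vE_zero (x : VG m) (k : ℕ) : vE m 0 k x = 1 := by
  simp [vE]

lemma vpsi_eq_prod (hm : ∀ k, 2 ≤ m k) {j n : ℕ} (hj : j < vM m n) (x : VG m) :
    vpsi m j x = ∏ k ∈ Finset.range n, vE m (vdigit m j k) k x := by
  have base : vpsi m j x = ∏ k ∈ Finset.range (j + 1), vE m (vdigit m j k) k x := rfl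
  have h1 : (∏ k ∈ Finset.range (j + 1), vE m (vdigit m j k) k x)
      = ∏ k ∈ Finset.range (max (j + 1) n), vE m (vdigit m j k) k x := by
    apply Finset.prod_subset (Finset.range_subset_range.mpr (le_max_left _ _))
    intro k _ hk
    rw [Finset.mem_range, not_lt] at hk
    have hd : vdigit m j k = 0 :=
      vdigit_eq_zero (lt_trans (lt_of_lt_of_le (Nat.lt_succ_self j) hk) (lt_vM hm k))
    rw [hd, vE_zero]
  have h2 : (∏ k ∈ Finset.range n, vE m (vdigit m j k) k x)
      = ∏ k ∈ Finset.range (max (j + 1) n), vE m (vdigit m j k) k x := by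
    apply Finset.prod_subset (Finset.range_subset_range.mpr (le_max_right _ _))
    intro k _ hk
    rw [Finset.mem_range, not_lt] at hk
    have hd : vdigit m j k = 0 :=
      vdigit_eq_zero (lt_of_lt_of_le hj (vM_mono hm hk))
    rw [hd, vE_zero]
  rw [base, h1, h2]

lemma vE_as_exp_mul_I (hm : ∀ k, 2 ≤ m k) (d k : ℕ) (x : VG m) :
    vE m d k x = Complex.exp ((2 * Real.pi * d * ((x k : ℕ) : ℝ) / (m k) : ℝ) * Complex.I) := by
  unfold vE
  congr 1
  have : ((m k : ℂ)) ≠ 0 := by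
    have := hm k
    exact_mod_cast (by omega : m k ≠ 0)
  push_cast
  field_simp

lemma vE_abs (hm : ∀ k, 2 ≤ m k) (d k : ℕ) (x : VG m) : ‖(vE m d k x)‖ = 1 := by
  rw [vE_as_exp_mul_I hm, Complex.norm_exp_ofReal_mul_I]

lemma vpsi_abs (hm : ∀ k, 2 ≤ m k) (j : ℕ) (x : VG m) : ‖(vpsi m j x)‖ = 1 := by
  rw [vpsi_eq_prod hm (lt_vM hm (j+1) |> lt_of_le_of_lt (Nat.le_succ j)) x]
  rw [norm_prod]
  exact Finset.prod_eq_one (fun k _ => vE_abs hm _ k x)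

lemma vE_measurable (d k : ℕ) : Measurable (vE m d k) := by
  apply Measurable.comp (f := fun x : VG m => x k)
    (g := fun a : Fin (m k) => Complex.exp (2 * Real.pi * Complex.I * (d : ℂ) * ((a : ℕ) : ℂ) / (m k)))
  · exact Measurable.of_discrete
  · exact measurable_pi_apply k

lemma vpsi_measurable (hm : ∀ k, 2 ≤ m k) (j : ℕ) : Measurable (vpsi m j) := by
  have : vpsi m j = fun x => ∏ k ∈ Finset.range (j+1), vE m (vdigit m j k) k x := rfl
  rw [this]
  exact Finset.measurable_prod _ (fun k _ => vE_measurable _ k)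

lemma geom_char_sum (M : ℕ) (hM : 0 < M) (c : ℤ) :
    ∑ a ∈ Finset.range M, Complex.exp (2 * Real.pi * Complex.I * c / M) ^ a
      = if (M : ℤ) ∣ c then (M : ℂ) else 0 := by
  have hMc : (M : ℂ) ≠ 0 := Nat.cast_ne_zero.mpr hM.ne'
  by_cases h : (M : ℤ) ∣ c
  · obtain ⟨e, he⟩ := h
    have h1 : Complex.exp (2 * Real.pi * Complex.I * c / M) = 1 := by
      rw [he]
      have : (2 * Real.pi * Complex.I * ((M : ℤ) * e : ℤ) / M : ℂ)
          = (e : ℤ) * (2 * Real.pi * Complex.I) := by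
        push_cast
        field_simp
      rw [this]
      simpa using Complex.exp_int_mul_two_pi_mul_I e
    rw [if_pos ⟨e, he⟩]
    simp [h1]
  · rw [if_neg h]
    set z := Complex.exp (2 * Real.pi * Complex.I * c / M) with hz
    have hprim : IsPrimitiveRoot (Complex.exp (2 * Real.pi * Complex.I / M)) M :=
      Complex.isPrimitiveRoot_exp M hM.ne'
    have hzeta : z = Complex.exp (2 * Real.pi * Complex.I / M) ^ (c : ℤ) := by
      rw [hz, ← Complex.exp_int_mul]
      congr 1
      field_simp
    have hz1 : z ≠ 1 := by
      rw [hzeta]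
      intro hcon
      exact h ((hprim.zpow_eq_one_iff_dvd c).mp hcon)
    have hzM : z ^ M = 1 := by
      rw [hz, ← Complex.exp_nat_mul]
      have : (M : ℂ) * (2 * Real.pi * Complex.I * c / M) = (c : ℤ) * (2 * Real.pi * Complex.I) := by
        field_simp
      rw [this]
      exact Complex.exp_int_mul_two_pi_mul_I c
    rw [geom_sum_eq hz1, hzM, sub_self, zero_div]

lemma measurableSet_vCyl (n : ℕ) (x : VG m) : MeasurableSet (vCyl m n x) := by
  have : vCyl m n x = ⋂ (i : ℕ), ⋂ (_ : i < n), {y : VG m | y i = x i} := by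
    ext y; simp [vCyl, Set.mem_iInter]
  rw [this]
  refine MeasurableSet.iInter fun i => MeasurableSet.iInter fun _ => ?_
  show MeasurableSet ((fun y : VG m => y i) ⁻¹' {x i})
  exact (measurable_pi_apply i) (MeasurableSet.singleton (x i))

def vembed (m : ℕ → ℕ) (hm : ∀ k, 2 ≤ m k) (t : ℕ) : VG m :=
  fun i => ⟨vdigit m t i, vdigit_lt hm t i⟩

def vcode (n : ℕ) (x : VG m) : ℕ := ∑ j ∈ Finset.range n, (x j : ℕ) * vM m j

lemma vcode_lt (n : ℕ) (x : VG m) : vcode n x < vM m n := by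
  induction n with
  | zero => simp [vM, vcode]
  | succ n ih =>
    unfold vcode at *
    rw [Finset.sum_range_succ, vM_succ]
    have h1 : (x n : ℕ) + 1 ≤ m n := (x n).isLt
    calc ∑ j ∈ Finset.range n, (x j : ℕ) * vM m j + (x n : ℕ) * vM m n
        < vM m n + (x n : ℕ) * vM m n := by omega
      _ = ((x n : ℕ) + 1) * vM m n := by ring
      _ ≤ m n * vM m n := Nat.mul_le_mul_right _ h1

lemma vdigit_vcode (hm : ∀ k, 2 ≤ m k) (x : VG m) {i n : ℕ} (hi : i < n) :
    vdigit m (vcode n x) i = (x i : ℕ) := by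
  induction n with
  | zero => omega
  | succ n ih =>
    have hsplit : vcode (n+1) x = (x n : ℕ) * vM m n + vcode n x := by
      unfold vcode
      rw [Finset.sum_range_succ]; ring
    rcases Nat.lt_or_ge i n with h' | h'
    · rw [hsplit, vdigit_mul_add_of_lt hm h', ih h']
    · have hin : i = n := by omega
      rw [hin, hsplit, vdigit_mul_add_self hm (vcode_lt n x) (x n).isLt]

lemma mem_vCyl_vembed (hm : ∀ k, 2 ≤ m k) {n t : ℕ} (ht : t < vM m n) (x : VG m) :
    x ∈ vCyl m n (vembed m hm t) ↔ t = vcode n x := by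
  constructor
  · intro hx
    have : ∀ i ∈ Finset.range n, (x i : ℕ) * vM m i = vdigit m t i * vM m i := by
      intro i hi
      rw [Finset.mem_range] at hi
      rw [congrArg Fin.val (hx i hi)]
      rfl
    unfold vcode
    rw [Finset.sum_congr rfl this, vdigit_sum hm ht]
  · intro hx i hi
    apply Fin.ext
    show (x i : ℕ) = vdigit m t i
    rw [hx, vdigit_vcode hm x hi]

lemma vembed_agrees (hm : ∀ k, 2 ≤ m k) (n : ℕ) (x : VG m) {i : ℕ} (hi : i < n) :
    vembed m hm (vcode n x) i = x i := by
  apply Fin.ext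
  show vdigit m (vcode n x) i = (x i : ℕ)
  exact vdigit_vcode hm x hi

lemma integral_eq_sum (hm : ∀ k, 2 ≤ m k) (μ : Measure (VG m)) [IsProbabilityMeasure μ]
    (hμ : isVHaar μ) (n : ℕ) (f : VG m → ℂ)
    (hf : ∀ x y : VG m, (∀ i < n, x i = y i) → f x = f y) :
    ∫ x, f x ∂μ = (vM m n : ℝ)⁻¹ • ∑ t ∈ Finset.range (vM m n), f (vembed m hm t) := by
  have hdecomp : f = fun x => ∑ t ∈ Finset.range (vM m n),
      Set.indicator (vCyl m n (vembed m hm t)) (fun _ => f (vembed m hm t)) x := by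
    funext x
    rw [Finset.sum_eq_single (vcode n x)]
    · rw [Set.indicator_of_mem]
      · exact hf _ _ (fun i hi => (vembed_agrees hm n x hi).symm)
      · rw [mem_vCyl_vembed hm (vcode_lt n x)]
    · intro t ht htne
      rw [Finset.mem_range] at ht
      apply Set.indicator_of_notMem
      rw [mem_vCyl_vembed hm ht]
      exact htne
    · intro hc
      exact absurd (Finset.mem_range.mpr (vcode_lt n x)) hc
  conv_lhs => rw [hdecomp]
  rw [integral_finset_sum _ (fun t _ =>
    (integrable_const _).indicator (measurableSet_vCyl n _))]
  rw [Finset.smul_sum]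
  apply Finset.sum_congr rfl
  intro t _
  rw [integral_indicator_const _ (measurableSet_vCyl n _), measureReal_def, hμ n]
  congr 1
  rw [ENNReal.toReal_inv]
  simp

lemma sum_range_vM_succ {β : Type*} [AddCommMonoid β] (hm : ∀ k, 2 ≤ m k) (n : ℕ) (f : ℕ → β) :
    ∑ t ∈ Finset.range (vM m (n+1)), f t
      = ∑ a ∈ Finset.range (m n), ∑ r ∈ Finset.range (vM m n), f (a * vM m n + r) := by
  rw [← Finset.sum_product']
  apply Finset.sum_nbij' (i := fun t => (t / vM m n, t % vM m n))
    (j := fun p => p.1 * vM m n + p.2)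
  · intro t ht
    rw [Finset.mem_range] at ht
    rw [Finset.mem_product, Finset.mem_range, Finset.mem_range]
    constructor
    · rw [Nat.div_lt_iff_lt_mul (vM_pos hm n)]
      rw [vM_succ] at ht
      omega
    · exact Nat.mod_lt _ (vM_pos hm n)
  · intro p hp
    rw [Finset.mem_product, Finset.mem_range, Finset.mem_range] at hp
    rw [Finset.mem_range, vM_succ]
    calc p.1 * vM m n + p.2 < p.1 * vM m n + vM m n := by omega
      _ = (p.1 + 1) * vM m n := by ring
      _ ≤ m n * vM m n := Nat.mul_le_mul_right _ hp.1
  · intro t _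
    rw [mul_comm]
    exact Nat.div_add_mod t (vM m n)
  · intro p hp
    rw [Finset.mem_product, Finset.mem_range, Finset.mem_range] at hp
    have h1 : (p.1 * vM m n + p.2) / vM m n = p.1 := by
      rw [add_comm, Nat.add_mul_div_right _ _ (vM_pos hm n), Nat.div_eq_of_lt hp.2, zero_add]
    have h2 : (p.1 * vM m n + p.2) % vM m n = p.2 := by
      rw [add_comm, Nat.add_mul_mod_self_right, Nat.mod_eq_of_lt hp.2]
    exact Prod.ext h1 h2
  · intro t _
    rw [mul_comm (t / vM m n), Nat.div_add_mod]

lemma vM_eq_prod (n : ℕ) : vM m n = ∏ k ∈ Finset.range n, m k := by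
  induction n with
  | zero => simp [vM]
  | succ n ih => rw [vM_succ, Finset.prod_range_succ, ih, mul_comm]

lemma sum_embed_prod (hm : ∀ k, 2 ≤ m k) (n : ℕ) (F : ℕ → ℕ → ℂ) :
    ∑ t ∈ Finset.range (vM m n), ∏ k ∈ Finset.range n, F k (vdigit m t k)
      = ∏ k ∈ Finset.range n, ∑ a ∈ Finset.range (m k), F k a := by
  induction n with
  | zero => simp [vM]
  | succ n ih =>
    rw [sum_range_vM_succ hm n, Finset.prod_range_succ]
    have step : ∀ a ∈ Finset.range (m n), ∀ r ∈ Finset.range (vM m n),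
        (∏ k ∈ Finset.range (n+1), F k (vdigit m (a * vM m n + r) k))
          = (∏ k ∈ Finset.range n, F k (vdigit m r k)) * F n a := by
      intro a ha r hr
      rw [Finset.mem_range] at ha hr
      rw [Finset.prod_range_succ]
      congr 1
      · apply Finset.prod_congr rfl
        intro k hk
        rw [Finset.mem_range] at hk
        rw [vdigit_mul_add_of_lt hm hk]
      · rw [vdigit_mul_add_self hm hr ha]
    calc ∑ a ∈ Finset.range (m n), ∑ r ∈ Finset.range (vM m n),
          ∏ k ∈ Finset.range (n+1), F k (vdigit m (a * vM m n + r) k)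
        = ∑ a ∈ Finset.range (m n), ∑ r ∈ Finset.range (vM m n),
          (∏ k ∈ Finset.range n, F k (vdigit m r k)) * F n a := by
          apply Finset.sum_congr rfl; intro a ha
          exact Finset.sum_congr rfl (fun r hr => step a ha r hr)
      _ = (∏ k ∈ Finset.range n, ∑ a ∈ Finset.range (m k), F k a)
            * ∑ a ∈ Finset.range (m n), F n a := by
          rw [← ih]
          rw [Finset.sum_comm]
          rw [Finset.sum_mul]
          apply Finset.sum_congr rfl
          intro r _
          rw [Finset.mul_sum]

lemma charSum (hm : ∀ k, 2 ≤ m k) (k d e : ℕ) (hd : d < m k) (he : e < m k) :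
    ∑ a ∈ Finset.range (m k),
        Complex.exp (2 * Real.pi * Complex.I * (d : ℂ) * (a : ℂ) / (m k))
          * (starRingEnd ℂ) (Complex.exp (2 * Real.pi * Complex.I * (e : ℂ) * (a : ℂ) / (m k)))
      = if d = e then (m k : ℂ) else 0 := by
  have hmor : 0 < m k := lt_of_lt_of_le Nat.zero_lt_two (hm k)
  have hmc : ((m k : ℂ)) ≠ 0 := Nat.cast_ne_zero.mpr hmor.ne'
  set c : ℤ := (d : ℤ) - (e : ℤ) with hc
  have hterm : ∀ a ∈ Finset.range (m k),
      Complex.exp (2 * Real.pi * Complex.I * (d : ℂ) * (a : ℂ) / (m k))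
          * (starRingEnd ℂ) (Complex.exp (2 * Real.pi * Complex.I * (e : ℂ) * (a : ℂ) / (m k)))
        = Complex.exp (2 * Real.pi * Complex.I * (c : ℂ) / (m k)) ^ a := by
    intro a _
    rw [← Complex.exp_conj, ← Complex.exp_add, ← Complex.exp_nat_mul]
    congr 1
    have hconj : (starRingEnd ℂ) (2 * Real.pi * Complex.I * (e : ℂ) * (a : ℂ) / (m k))
        = -(2 * Real.pi * Complex.I * (e : ℂ) * (a : ℂ) / (m k)) := by
      simp [map_div₀, map_mul, Complex.conj_I, Complex.conj_ofReal, map_ofNat]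
      ring
    rw [hconj, hc]
    push_cast
    field_simp
    ring
  rw [Finset.sum_congr rfl hterm, geom_char_sum (m k) hmor c]
  by_cases hde : d = e
  · rw [if_pos hde, if_pos (by rw [hc, hde, sub_self]; exact dvd_zero _)]
  · rw [if_neg hde, if_neg]
    intro hdvd
    have hc0 : c ≠ 0 := by omega
    have h1 : (m k : ℤ) ≤ |c| := Int.le_of_dvd (abs_pos.mpr hc0) ((dvd_abs _ _).mpr hdvd)
    have h2 : |c| < (m k : ℤ) := by
      rw [abs_lt]; omega
    omega

lemma vE_depends (d k : ℕ) {x y : VG m} (h : x k = y k) : vE m d k x = vE m d k y := by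
  unfold vE; rw [h]

lemma vpsi_depends (hm : ∀ k, 2 ≤ m k) {j n : ℕ} (hj : j < vM m n) {x y : VG m}
    (h : ∀ i < n, x i = y i) : vpsi m j x = vpsi m j y := by
  rw [vpsi_eq_prod hm hj x, vpsi_eq_prod hm hj y]
  apply Finset.prod_congr rfl
  intro k hk
  rw [Finset.mem_range] at hk
  exact vE_depends _ k (h k hk)

lemma integral_vpsi_mul_conj (hm : ∀ k, 2 ≤ m k) (μ : Measure (VG m))
    [IsProbabilityMeasure μ] (hμ : isVHaar μ) {i j n : ℕ}
    (hi : i < vM m n) (hj : j < vM m n) :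
    ∫ x, vpsi m i x * (starRingEnd ℂ) (vpsi m j x) ∂μ = if i = j then 1 else 0 := by
  have hdep : ∀ x y : VG m, (∀ l < n, x l = y l) →
      vpsi m i x * (starRingEnd ℂ) (vpsi m j x) = vpsi m i y * (starRingEnd ℂ) (vpsi m j y) := by
    intro x y h
    rw [vpsi_depends hm hi h, vpsi_depends hm hj h]
  rw [integral_eq_sum hm μ hμ n _ hdep]
  have hval : ∀ t, t < vM m n → vpsi m i (vembed m hm t) * (starRingEnd ℂ) (vpsi m j (vembed m hm t))
      = ∏ k ∈ Finset.range n,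
          (Complex.exp (2 * Real.pi * Complex.I * (vdigit m i k : ℂ) * (vdigit m t k : ℂ) / (m k))
            * (starRingEnd ℂ)
              (Complex.exp (2 * Real.pi * Complex.I * (vdigit m j k : ℂ) * (vdigit m t k : ℂ) / (m k)))) := by
    intro t _
    rw [vpsi_eq_prod hm hi, vpsi_eq_prod hm hj, map_prod, ← Finset.prod_mul_distrib]
    apply Finset.prod_congr rfl
    intro k _
    rfl
  have hsum : (∑ t ∈ Finset.range (vM m n),
      vpsi m i (vembed m hm t) * (starRingEnd ℂ) (vpsi m j (vembed m hm t)))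
      = ∏ k ∈ Finset.range n,
          (if vdigit m i k = vdigit m j k then (m k : ℂ) else 0) := by
    rw [Finset.sum_congr rfl (fun t ht => hval t (Finset.mem_range.mp ht))]
    rw [sum_embed_prod hm n (fun k a =>
      Complex.exp (2 * Real.pi * Complex.I * (vdigit m i k : ℂ) * (a : ℂ) / (m k))
        * (starRingEnd ℂ) (Complex.exp (2 * Real.pi * Complex.I * (vdigit m j k : ℂ) * (a : ℂ) / (m k))))]
    apply Finset.prod_congr rfl
    intro k _
    exact charSum hm k _ _ (vdigit_lt hm i k) (vdigit_lt hm j k)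
  rw [hsum]
  by_cases hij : i = j
  · rw [if_pos hij]
    have : ∀ k ∈ Finset.range n, (if vdigit m i k = vdigit m j k then (m k : ℂ) else 0) = (m k : ℂ) := by
      intro k _; rw [if_pos (by rw [hij])]
    rw [Finset.prod_congr rfl this]
    have hprod : (∏ k ∈ Finset.range n, (m k : ℂ)) = (vM m n : ℂ) := by
      rw [vM_eq_prod]; push_cast; rfl
    rw [hprod]
    rw [Complex.real_smul]
    have hne : ((vM m n : ℂ)) ≠ 0 := Nat.cast_ne_zero.mpr (vM_pos hm n).ne'
    push_cast
    field_simp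
  · rw [if_neg hij]
    obtain ⟨k, hk, hne⟩ : ∃ k, k < n ∧ vdigit m i k ≠ vdigit m j k := by
      by_contra hcon
      push_neg at hcon
      apply hij
      have hi' := vdigit_sum hm hi
      have hj' := vdigit_sum hm hj
      rw [← hi', ← hj']
      exact Finset.sum_congr rfl (fun k hk => by
        rw [hcon k (Finset.mem_range.mp hk)])
    have : (∏ k ∈ Finset.range n, if vdigit m i k = vdigit m j k then ((m k : ℂ)) else 0) = 0 :=
      Finset.prod_eq_zero (Finset.mem_range.mpr hk) (if_neg hne)
    rw [this, smul_zero]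

lemma vE_geom_sum (hm : ∀ k, 2 ≤ m k) (n : ℕ) (x : VG m) :
    ∑ a ∈ Finset.range (m n), vE m a n x = if (x n : ℕ) = 0 then (m n : ℂ) else 0 := by
  have hmor : 0 < m n := lt_of_lt_of_le Nat.zero_lt_two (hm n)
  have hmc : ((m n : ℂ)) ≠ 0 := Nat.cast_ne_zero.mpr hmor.ne'
  have hterm : ∀ a ∈ Finset.range (m n), vE m a n x
      = Complex.exp (2 * Real.pi * Complex.I * (((x n : ℕ) : ℤ) : ℂ) / (m n)) ^ a := by
    intro a _
    unfold vE
    rw [← Complex.exp_nat_mul]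
    congr 1
    push_cast
    field_simp
  rw [Finset.sum_congr rfl hterm, geom_char_sum (m n) hmor ((x n : ℕ) : ℤ)]
  by_cases hx : (x n : ℕ) = 0
  · rw [if_pos hx, if_pos (by rw [hx]; exact dvd_zero _)]
  · rw [if_neg hx, if_neg]
    intro hdvd
    have h1 : (m n : ℤ) ≤ ((x n : ℕ) : ℤ) :=
      Int.le_of_dvd (by omega) hdvd
    have h2 := (x n).isLt
    omega

lemma vD_vM (hm : ∀ k, 2 ≤ m k) (n : ℕ) (x : VG m) :
    vD m (vM m n) x = if (∀ i < n, (x i : ℕ) = 0) then (vM m n : ℂ) else 0 := by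
  induction n with
  | zero =>
    rw [if_pos (by omega)]
    show (∑ k ∈ Finset.range (vM m 0), vpsi m k x) = ((vM m 0 : ℕ) : ℂ)
    have h0 : vM m 0 = 1 := rfl
    rw [h0]
    rw [Finset.sum_range_one]
    have : vpsi m 0 x = 1 := by
      unfold vpsi
      rw [Finset.prod_range_one]
      have hd : vdigit m 0 0 = 0 := vdigit_eq_zero (by rw [show vM m 0 = 1 from rfl]; omega)
      rw [hd]
      norm_num
    rw [this]
    norm_num
  | succ n ih =>
    unfold vD
    rw [sum_range_vM_succ hm n (fun t => vpsi m t x)]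
    have hterm : ∀ a ∈ Finset.range (m n), ∀ r ∈ Finset.range (vM m n),
        vpsi m (a * vM m n + r) x = vpsi m r x * vE m a n x := by
      intro a ha r hr
      rw [Finset.mem_range] at ha hr
      have hlt : a * vM m n + r < vM m (n+1) := by
        rw [vM_succ]
        calc a * vM m n + r < a * vM m n + vM m n := by omega
          _ = (a + 1) * vM m n := by ring
          _ ≤ m n * vM m n := Nat.mul_le_mul_right _ ha
      rw [vpsi_eq_prod hm hlt, Finset.prod_range_succ,
        vpsi_eq_prod hm (show r < vM m n from hr)]
      congr 1
      · apply Finset.prod_congr rfl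
        intro k hk
        rw [Finset.mem_range] at hk
        rw [vdigit_mul_add_of_lt hm hk]
      · rw [vdigit_mul_add_self hm hr ha]
    calc (∑ a ∈ Finset.range (m n), ∑ r ∈ Finset.range (vM m n), vpsi m (a * vM m n + r) x)
        = ∑ a ∈ Finset.range (m n), ∑ r ∈ Finset.range (vM m n), vpsi m r x * vE m a n x := by
          apply Finset.sum_congr rfl; intro a ha
          exact Finset.sum_congr rfl (fun r hr => hterm a ha r hr)
      _ = (∑ a ∈ Finset.range (m n), vE m a n x) * ∑ r ∈ Finset.range (vM m n), vpsi m r x := by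
          rw [Finset.sum_mul]
          apply Finset.sum_congr rfl
          intro a _
          rw [Finset.mul_sum]
          apply Finset.sum_congr rfl
          intro r _
          ring
      _ = (if (x n : ℕ) = 0 then (m n : ℂ) else 0)
            * (if (∀ i < n, (x i : ℕ) = 0) then (vM m n : ℂ) else 0) := by
          rw [vE_geom_sum hm n x,
            show (∑ r ∈ Finset.range (vM m n), vpsi m r x) = vD m (vM m n) x from rfl, ih]
      _ = if (∀ i < n + 1, (x i : ℕ) = 0) then ((vM m (n+1) : ℕ) : ℂ) else 0 := by
          by_cases h1 : (x n : ℕ) = 0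
          · by_cases h2 : ∀ i < n, (x i : ℕ) = 0
            · have hall : ∀ i < n + 1, (x i : ℕ) = 0 := by
                intro i hi
                rcases Nat.lt_succ_iff_lt_or_eq.mp hi with h | h
                · exact h2 i h
                · rw [h]; exact h1
              rw [if_pos h1, if_pos h2, if_pos hall, vM_succ]
              push_cast
              ring
            · have hcon' : ¬ (∀ i < n + 1, (x i : ℕ) = 0) := fun hcon =>
                h2 (fun i hi => hcon i (Nat.lt_succ_of_lt hi))
              rw [if_pos h1, if_neg h2, if_neg hcon']
              ring
          · have hcon' : ¬ (∀ i < n + 1, (x i : ℕ) = 0) := fun hcon =>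
              h1 (hcon n (Nat.lt_succ_self n))
            rw [if_neg h1, if_neg hcon']
            ring

lemma vpsi_zero_eq_one (x : VG m) : vpsi m 0 x = 1 := by
  unfold vpsi
  rw [Finset.prod_range_one]
  have hd : vdigit m 0 0 = 0 := by
    unfold vdigit
    simp [vM]
  rw [hd]
  norm_num

lemma integrable_vpsi (hm : ∀ k, 2 ≤ m k) (μ : Measure (VG m)) [IsProbabilityMeasure μ]
    (j : ℕ) : Integrable (vpsi m j) μ := by
  apply Integrable.mono' (integrable_const (1 : ℝ))
    (vpsi_measurable hm j).aestronglyMeasurable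
  apply Filter.Eventually.of_forall
  intro x
  rw [vpsi_abs hm]

lemma integrable_vpsi_mul_conj (hm : ∀ k, 2 ≤ m k) (μ : Measure (VG m))
    [IsProbabilityMeasure μ] (i j : ℕ) :
    Integrable (fun x => vpsi m i x * (starRingEnd ℂ) (vpsi m j x)) μ := by
  apply Integrable.mono' (integrable_const (1 : ℝ))
  · exact ((vpsi_measurable hm i).mul (Complex.continuous_conj.measurable.comp (vpsi_measurable hm j))).aestronglyMeasurable
  · apply Filter.Eventually.of_forall
    intro x
    rw [norm_mul, Complex.norm_conj,
      vpsi_abs hm, vpsi_abs hm, mul_one]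

lemma vCoeff_vpsi (hm : ∀ k, 2 ≤ m k) (μ : Measure (VG m)) [IsProbabilityMeasure μ]
    (hμ : isVHaar μ) (j l : ℕ) :
    ∫ x, vpsi m j x * (starRingEnd ℂ) (vpsi m l x) ∂μ = if j = l then 1 else 0 := by
  apply integral_vpsi_mul_conj hm μ hμ (n := max (j+1) (l+1))
  · exact lt_of_lt_of_le (lt_vM hm j) (vM_mono hm (by omega))
  · exact lt_of_lt_of_le (lt_vM hm l) (vM_mono hm (by omega))

lemma fA_apply (hm : ∀ k, 2 ≤ m k) (A : ℕ) (x : VG m) :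
    vD m (vM m (A+1)) x - vD m (vM m A) x
      = ∑ j ∈ Finset.Ico (vM m A) (vM m (A+1)), vpsi m j x := by
  rw [Finset.sum_Ico_eq_sub _ (vM_mono hm (Nat.le_succ A))]
  rfl

lemma vCoeff_fA (hm : ∀ k, 2 ≤ m k) (μ : Measure (VG m)) [IsProbabilityMeasure μ]
    (hμ : isVHaar μ) (A l : ℕ) :
    vCoeff μ (fun x => vD m (vM m (A+1)) x - vD m (vM m A) x) l
      = if l ∈ Finset.Ico (vM m A) (vM m (A+1)) then 1 else 0 := by
  unfold vCoeff
  have h1 : ∀ x : VG m, (vD m (vM m (A+1)) x - vD m (vM m A) x) * (starRingEnd ℂ) (vpsi m l x)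
      = ∑ j ∈ Finset.Ico (vM m A) (vM m (A+1)), vpsi m j x * (starRingEnd ℂ) (vpsi m l x) := by
    intro x
    rw [fA_apply hm A x, Finset.sum_mul]
  calc ∫ x, (vD m (vM m (A+1)) x - vD m (vM m A) x) * (starRingEnd ℂ) (vpsi m l x) ∂μ
      = ∫ x, ∑ j ∈ Finset.Ico (vM m A) (vM m (A+1)),
          vpsi m j x * (starRingEnd ℂ) (vpsi m l x) ∂μ := by
        congr 1; funext x; exact h1 x
    _ = ∑ j ∈ Finset.Ico (vM m A) (vM m (A+1)),
          ∫ x, vpsi m j x * (starRingEnd ℂ) (vpsi m l x) ∂μ :=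
        integral_finset_sum _ (fun j _ => integrable_vpsi_mul_conj hm μ j l)
    _ = ∑ j ∈ Finset.Ico (vM m A) (vM m (A+1)), if j = l then (1:ℂ) else 0 :=
        Finset.sum_congr rfl (fun j _ => vCoeff_vpsi hm μ hμ j l)
    _ = if l ∈ Finset.Ico (vM m A) (vM m (A+1)) then 1 else 0 := by
        rw [Finset.sum_ite_eq' _ l (fun _ => (1:ℂ))]

lemma vS_fA (hm : ∀ k, 2 ≤ m k) (μ : Measure (VG m)) [IsProbabilityMeasure μ]
    (hμ : isVHaar μ) (A N : ℕ) (x : VG m) :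
    vS μ (fun y => vD m (vM m (A+1)) y - vD m (vM m A) y) N x
      = ∑ l ∈ Finset.range N ∩ Finset.Ico (vM m A) (vM m (A+1)), vpsi m l x := by
  unfold vS
  rw [← Finset.sum_ite_mem]
  apply Finset.sum_congr rfl
  intro l _
  rw [vCoeff_fA hm μ hμ A l, ite_mul, one_mul, zero_mul]

lemma vS_fA_vM (hm : ∀ k, 2 ≤ m k) (μ : Measure (VG m)) [IsProbabilityMeasure μ]
    (hμ : isVHaar μ) (A k : ℕ) (x : VG m) :
    vS μ (fun y => vD m (vM m (A+1)) y - vD m (vM m A) y) (vM m k) x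
      = if A + 1 ≤ k then vD m (vM m (A+1)) x - vD m (vM m A) x else 0 := by
  rw [vS_fA hm μ hμ]
  rcases le_or_gt (A+1) k with hk | hk
  · rw [if_pos hk]
    have hsub : Finset.Ico (vM m A) (vM m (A+1)) ⊆ Finset.range (vM m k) := by
      intro l hl
      rw [Finset.mem_Ico] at hl
      rw [Finset.mem_range]
      exact lt_of_lt_of_le hl.2 (vM_mono hm hk)
    rw [Finset.inter_eq_right.mpr hsub, ← fA_apply hm A x]
  · rw [if_neg (by omega)]
    have hempty : Finset.range (vM m k) ∩ Finset.Ico (vM m A) (vM m (A+1)) = ∅ := by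
      apply Finset.eq_empty_of_forall_notMem
      intro l hl
      rw [Finset.mem_inter, Finset.mem_range, Finset.mem_Ico] at hl
      have : vM m k ≤ vM m A := vM_mono hm (by omega)
      omega
    rw [hempty, Finset.sum_empty]

lemma integrable_vS_fA (hm : ∀ k, 2 ≤ m k) (μ : Measure (VG m)) [IsProbabilityMeasure μ]
    (k : ℕ) (f : VG m → ℂ) : Integrable (fun x => vS μ f k x) μ := by
  unfold vS
  apply integrable_finset_sum
  intro l _
  exact (integrable_vpsi hm μ l).const_mul _

lemma integrable_vSigma (hm : ∀ k, 2 ≤ m k) (μ : Measure (VG m)) [IsProbabilityMeasure μ]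
    (N : ℕ) (f : VG m → ℂ) : Integrable (fun x => vSigma μ f N x) μ := by
  unfold vSigma
  apply Integrable.const_mul
  apply integrable_finset_sum
  intro k _
  exact integrable_vS_fA hm μ k f

lemma sigma_coeff (hm : ∀ k, 2 ≤ m k) (μ : Measure (VG m)) [IsProbabilityMeasure μ]
    (hμ : isVHaar μ) (A : ℕ) :
    ∫ x, vSigma μ (fun y => vD m (vM m (A+1)) y - vD m (vM m A) y) (vM m (A+1)) x
        * (starRingEnd ℂ) (vpsi m (vM m A) x) ∂μ
      = ((vM m (A+1) : ℂ))⁻¹ * ((vM m (A+1) - vM m A : ℕ) : ℂ) := by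
  set MA := vM m A with hMA
  set MB := vM m (A+1) with hMB
  have hAB : MA < MB := by
    have h2' : 2 * MA ≤ MB := by
      rw [hMA, hMB, vM_succ]
      exact Nat.mul_le_mul_right _ (hm A)
    have := vM_pos hm A
    omega
  have hpt : ∀ x : VG m, vSigma μ (fun y => vD m (vM m (A+1)) y - vD m (vM m A) y) MB x
      * (starRingEnd ℂ) (vpsi m MA x)
      = ((MB : ℂ))⁻¹ • ∑ k ∈ Finset.Icc 1 MB,
          ∑ l ∈ Finset.range k ∩ Finset.Ico MA MB,
            vpsi m l x * (starRingEnd ℂ) (vpsi m MA x) := by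
    intro x
    unfold vSigma
    rw [smul_eq_mul, mul_assoc, Finset.sum_mul]
    congr 1
    apply Finset.sum_congr rfl
    intro k _
    rw [vS_fA hm μ hμ A k x, Finset.sum_mul]
  calc (∫ x, vSigma μ (fun y => vD m (vM m (A+1)) y - vD m (vM m A) y) MB x
          * (starRingEnd ℂ) (vpsi m MA x) ∂μ)
      = ∫ x, ((MB : ℂ))⁻¹ • ∑ k ∈ Finset.Icc 1 MB,
          ∑ l ∈ Finset.range k ∩ Finset.Ico MA MB,
            vpsi m l x * (starRingEnd ℂ) (vpsi m MA x) ∂μ := by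
        congr 1; funext x; exact hpt x
    _ = ((MB : ℂ))⁻¹ • ∫ x, ∑ k ∈ Finset.Icc 1 MB,
          ∑ l ∈ Finset.range k ∩ Finset.Ico MA MB,
            vpsi m l x * (starRingEnd ℂ) (vpsi m MA x) ∂μ := integral_smul _ _
    _ = ((MB : ℂ))⁻¹ • ∑ k ∈ Finset.Icc 1 MB, ∫ x,
          ∑ l ∈ Finset.range k ∩ Finset.Ico MA MB,
            vpsi m l x * (starRingEnd ℂ) (vpsi m MA x) ∂μ := by
        rw [integral_finset_sum]
        intro k _
        apply integrable_finset_sum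
        intro l _
        exact integrable_vpsi_mul_conj hm μ l MA
    _ = ((MB : ℂ))⁻¹ • ∑ k ∈ Finset.Icc 1 MB, ((if MA < k then (1:ℂ) else 0)) := by
        congr 1
        apply Finset.sum_congr rfl
        intro k _
        rw [integral_finset_sum _ (fun l _ => integrable_vpsi_mul_conj hm μ l MA)]
        rw [Finset.sum_congr rfl (fun l _ => vCoeff_vpsi hm μ hμ l MA)]
        rw [Finset.sum_ite_eq' _ MA (fun _ => (1:ℂ))]
        congr 1
        rw [eq_iff_iff, Finset.mem_inter, Finset.mem_range, Finset.mem_Ico]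
        constructor
        · intro h; exact h.1
        · intro h; exact ⟨h, le_refl _, hAB⟩
    _ = ((MB : ℂ))⁻¹ * ((MB - MA : ℕ) : ℂ) := by
        rw [smul_eq_mul]
        congr 1
        rw [Finset.sum_boole]
        congr 1
        have hfilter : Finset.filter (fun k => MA < k) (Finset.Icc 1 MB) = Finset.Ioc MA MB := by
          apply Finset.ext
          intro k
          rw [Finset.mem_filter, Finset.mem_Icc, Finset.mem_Ioc]
          have : 1 ≤ MA := vM_pos hm A
          omega
        rw [hfilter, Nat.card_Ioc]

lemma sigma_L1_lower (hm : ∀ k, 2 ≤ m k) (μ : Measure (VG m)) [IsProbabilityMeasure μ]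
    (hμ : isVHaar μ) (A : ℕ) :
    (1:ℝ)/2 ≤ ∫ x, ‖
      (vSigma μ (fun y => vD m (vM m (A+1)) y - vD m (vM m A) y) (vM m (A+1)) x)‖ ∂μ := by
  set MA := vM m A with hMA
  set MB := vM m (A+1) with hMB
  have h2 : 2 * MA ≤ MB := by
    rw [hMA, hMB, vM_succ]
    exact Nat.mul_le_mul_right _ (hm A)
  have hApos : 0 < MA := vM_pos hm A
  have hBpos : 0 < MB := vM_pos hm (A+1)
  set σ := fun x => vSigma μ (fun y => vD m (vM m (A+1)) y - vD m (vM m A) y) MB x with hσ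
  have step1 : ‖∫ x, σ x * (starRingEnd ℂ) (vpsi m MA x) ∂μ‖
      ≤ ∫ x, ‖(σ x)‖ ∂μ := by
    refine le_trans (norm_integral_le_integral_norm _) ?_
    apply le_of_eq
    congr 1
    funext x
    rw [norm_mul, Complex.norm_conj,
      vpsi_abs hm, mul_one]
  have step2 : ‖∫ x, σ x * (starRingEnd ℂ) (vpsi m MA x) ∂μ‖ = ((MB - MA : ℕ) : ℝ) / MB := by
    rw [hσ, sigma_coeff hm μ hμ A]
    rw [norm_mul, norm_inv]
    rw [Complex.norm_natCast, Complex.norm_natCast]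
    rw [inv_mul_eq_div]
  have step3 : (1:ℝ)/2 ≤ ((MB - MA : ℕ) : ℝ) / MB := by
    rw [div_le_div_iff₀ (by norm_num) (by exact_mod_cast hBpos)]
    have : (MB:ℝ) - MA ≤ ((MB - MA : ℕ) : ℝ) := by
      rw [Nat.cast_sub (by omega)]
    push_cast [Nat.cast_sub (by omega : MA ≤ MB)]
    have hABr : 2 * (MA:ℝ) ≤ MB := by exact_mod_cast h2
    linarith
  calc (1:ℝ)/2 ≤ ((MB - MA : ℕ) : ℝ) / MB := step3
    _ = ‖∫ x, σ x * (starRingEnd ℂ) (vpsi m MA x) ∂μ‖ := step2.symm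
    _ ≤ ∫ x, ‖(σ x)‖ ∂μ := step1

lemma vI_eq_vCyl (hm : ∀ k, 2 ≤ m k) (n : ℕ) :
    vI m n = vCyl m n (fun k => (⟨0, lt_of_lt_of_le Nat.zero_lt_two (hm k)⟩ : Fin (m k))) := by
  ext y
  constructor
  · intro h i hi
    exact Fin.ext (h i hi)
  · intro h i hi
    exact congrArg Fin.val (h i hi)

lemma measurableSet_vI (hm : ∀ k, 2 ≤ m k) (n : ℕ) : MeasurableSet (vI m n) := by
  rw [vI_eq_vCyl hm n]
  exact measurableSet_vCyl n _

lemma measure_vI (hm : ∀ k, 2 ≤ m k) (μ : Measure (VG m)) (hμ : isVHaar μ) (n : ℕ) :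
    μ (vI m n) = ((vM m n : ℝ≥0∞))⁻¹ := by
  rw [vI_eq_vCyl hm n]
  exact hμ n _

lemma integrable_fA (hm : ∀ k, 2 ≤ m k) (μ : Measure (VG m)) [IsProbabilityMeasure μ] (A : ℕ) :
    Integrable (fun x => vD m (vM m (A+1)) x - vD m (vM m A) x) μ := by
  have h : (fun x : VG m => vD m (vM m (A+1)) x - vD m (vM m A) x)
      = fun x => ∑ j ∈ Finset.Ico (vM m A) (vM m (A+1)), vpsi m j x := funext (fA_apply hm A)
  rw [h]
  exact integrable_finset_sum _ (fun j _ => integrable_vpsi hm μ j)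

lemma fA_eq_zero_off (hm : ∀ k, 2 ≤ m k) (A : ℕ) {x : VG m} (hx : x ∉ vI m A) :
    vD m (vM m (A+1)) x - vD m (vM m A) x = 0 := by
  have hx' : ¬ (∀ i < A, (x i : ℕ) = 0) := hx
  have hx'' : ¬ (∀ i < A + 1, (x i : ℕ) = 0) := fun h =>
    hx' (fun i hi => h i (Nat.lt_succ_of_lt hi))
  rw [vD_vM hm (A+1) x, vD_vM hm A x, if_neg hx', if_neg hx'', sub_zero]

lemma fA_on (hm : ∀ k, 2 ≤ m k) (A : ℕ) {x : VG m} (hx : x ∈ vI m (A+1)) :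
    vD m (vM m (A+1)) x - vD m (vM m A) x = ((vM m (A+1) - vM m A : ℕ) : ℂ) := by
  have h1 : ∀ i < A + 1, (x i : ℕ) = 0 := hx
  have h2 : ∀ i < A, (x i : ℕ) = 0 := fun i hi => h1 i (Nat.lt_succ_of_lt hi)
  rw [vD_vM hm (A+1) x, vD_vM hm A x, if_pos h1, if_pos h2,
    Nat.cast_sub (vM_mono hm (Nat.le_succ A))]

lemma abs_fA_le (hm : ∀ k, 2 ≤ m k) (A : ℕ) (x : VG m) :
    ‖(vD m (vM m (A+1)) x - vD m (vM m A) x)‖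
      ≤ ((vM m (A+1) + vM m A : ℕ) : ℝ) := by
  refine le_trans (norm_sub_le _ _) ?_
  have h1 : ∀ n, ‖(vD m (vM m n) x)‖ ≤ (vM m n : ℝ) := by
    intro n
    rw [vD_vM hm n x]
    split_ifs
    · rw [Complex.norm_natCast]
    · rw [norm_zero]
      positivity
  push_cast
  exact add_le_add (h1 (A+1)) (h1 A)

lemma vS_one (μ : Measure (VG m)) (f : VG m → ℂ) (x : VG m) :
    vS μ f 1 x = vCoeff μ f 0 := by
  unfold vS
  rw [Finset.sum_range_one, vpsi_zero_eq_one, mul_one]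

lemma vCoeff_sigAbs (hm : ∀ k, 2 ≤ m k) (μ : Measure (VG m)) [IsProbabilityMeasure μ]
    (A : ℕ) :
    vCoeff μ (sigAbsFA μ A) 0
      = ((∫ x, ‖(vSigma μ (fun y => vD m (vM m (A+1)) y - vD m (vM m A) y)
          (vM m (A+1)) x)‖ ∂μ : ℝ) : ℂ) := by
  unfold vCoeff
  have h : ∀ x : VG m, sigAbsFA μ A x * (starRingEnd ℂ) (vpsi m 0 x)
      = ((‖(vSigma μ (fun y => vD m (vM m (A+1)) y - vD m (vM m A) y)
          (vM m (A+1)) x)‖ : ℝ) : ℂ) := by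
    intro x
    rw [vpsi_zero_eq_one, map_one, mul_one]
    rfl
  calc ∫ x, sigAbsFA μ A x * (starRingEnd ℂ) (vpsi m 0 x) ∂μ
      = ∫ x, ((‖(vSigma μ (fun y => vD m (vM m (A+1)) y - vD m (vM m A) y)
          (vM m (A+1)) x)‖ : ℝ) : ℂ) ∂μ := by
        congr 1; funext x; exact h x
    _ = _ := integral_ofReal

theorem main_thm (hm : ∀ k, 2 ≤ m k) (hb : ∃ B, ∀ k, m k ≤ B)
    (μ : Measure (VG m)) [IsProbabilityMeasure μ] (hμ : isVHaar μ)
    (p : ℝ) (hp0 : 0 < p) (hp1 : p < 1) :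
    (∃ c : ℝ≥0∞, 0 < c ∧ ∀ A : ℕ,
      c * (vM m A : ℝ≥0∞) ^ (1 / p - 1) *
          vHp μ p (fun x => vD m (vM m (A + 1)) x - vD m (vM m A) x) ≤
        vHp μ p (sigAbsFA μ A)) ∧
    ¬ ∃ C : ℝ≥0, ∀ f : VG m → ℂ, Integrable f μ → ∀ n : ℕ,
        vHp μ p (fun x => (‖(vSigma μ f (vM m n) x)‖ : ℂ)) ≤ C * vHp μ p f := by
  obtain ⟨B, hB⟩ := hb
  have hB2 : 2 ≤ B := le_trans (hm 0) (hB 0)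
  have h1p : (0:ℝ) ≤ 1/p := one_div_nonneg.mpr hp0.le
  have hQ0 : ∀ A : ℕ, ((vM m A : ℕ) : ℝ≥0∞) ≠ 0 := fun A => by
    exact_mod_cast (vM_pos hm A).ne'
  have hQtop : ∀ A : ℕ, ((vM m A : ℕ) : ℝ≥0∞) ≠ ⊤ := fun A => ENNReal.natCast_ne_top _
  have h2B0 : (2 * (B:ℝ≥0∞)) ≠ 0 := by
    apply mul_ne_zero
    · norm_num
    · exact_mod_cast (by omega : B ≠ 0)
  have h2Btop : (2 * (B:ℝ≥0∞)) ≠ ⊤ := ENNReal.mul_ne_top (by norm_num) (ENNReal.natCast_ne_top _)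
  -- sup formula for fA
  have hsup : ∀ (A : ℕ) (x : VG m),
      (⨆ k, ENNReal.ofReal (‖
        (vS μ (fun y => vD m (vM m (A+1)) y - vD m (vM m A) y) (vM m k) x)‖))
      = ENNReal.ofReal (‖(vD m (vM m (A+1)) x - vD m (vM m A) x)‖) := by
    intro A x
    apply le_antisymm
    · apply iSup_le
      intro k
      rw [vS_fA_vM hm μ hμ A k x]
      split_ifs with h
      · exact le_refl _
      · simp
    · have h := le_iSup (fun k => ENNReal.ofReal (‖
        (vS μ (fun y => vD m (vM m (A+1)) y - vD m (vM m A) y) (vM m k) x)‖)) (A+1)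
      rwa [vS_fA_vM hm μ hμ A (A+1) x, if_pos (le_refl _)] at h
  have hHfA : ∀ A : ℕ, vHp μ p (fun x => vD m (vM m (A+1)) x - vD m (vM m A) x)
      = (∫⁻ x, (ENNReal.ofReal (‖(vD m (vM m (A+1)) x - vD m (vM m A) x)‖)) ^ p ∂μ)
          ^ (1/p) := by
    intro A
    unfold vHp
    congr 1
    apply lintegral_congr
    intro x
    rw [hsup A x]
  -- upper bound for ‖f_A‖_{H_p}
  have hup : ∀ A : ℕ, vHp μ p (fun x => vD m (vM m (A+1)) x - vD m (vM m A) x)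
      ≤ 2 * (B:ℝ≥0∞) * (vM m A : ℝ≥0∞) * (((vM m A : ℝ≥0∞)) ^ (1/p))⁻¹ := by
    intro A
    rw [hHfA A]
    have hptw : ∀ x : VG m,
        (ENNReal.ofReal (‖(vD m (vM m (A+1)) x - vD m (vM m A) x)‖)) ^ p
        ≤ Set.indicator (vI m A) (fun _ => (2 * (B:ℝ≥0∞) * (vM m A : ℝ≥0∞)) ^ p) x := by
      intro x
      by_cases hx : x ∈ vI m A
      · rw [Set.indicator_of_mem hx]
        apply ENNReal.rpow_le_rpow _ hp0.le
        refine le_trans (ENNReal.ofReal_le_ofReal (abs_fA_le hm A x)) ?_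
        rw [ENNReal.ofReal_natCast]
        have hnat : vM m (A+1) + vM m A ≤ 2 * B * vM m A := by
          rw [vM_succ]
          have h1 : m A ≤ B := hB A
          have h2 : 1 ≤ B := by omega
          have h3 := vM_pos hm A
          nlinarith
        calc ((vM m (A+1) + vM m A : ℕ) : ℝ≥0∞) ≤ ((2 * B * vM m A : ℕ) : ℝ≥0∞) := by
              exact_mod_cast hnat
          _ = 2 * (B:ℝ≥0∞) * (vM m A : ℝ≥0∞) := by push_cast; ring
      · rw [fA_eq_zero_off hm A hx]
        simp [ENNReal.zero_rpow_of_pos hp0]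
    calc (∫⁻ x, (ENNReal.ofReal (‖(vD m (vM m (A+1)) x - vD m (vM m A) x)‖)) ^ p ∂μ)
            ^ (1/p)
        ≤ (∫⁻ x, Set.indicator (vI m A) (fun _ => (2 * (B:ℝ≥0∞) * (vM m A : ℝ≥0∞)) ^ p) x ∂μ)
            ^ (1/p) := ENNReal.rpow_le_rpow (lintegral_mono hptw) h1p
      _ = ((2 * (B:ℝ≥0∞) * (vM m A : ℝ≥0∞)) ^ p * ((vM m A : ℝ≥0∞))⁻¹) ^ (1/p) := by
          rw [lintegral_indicator (measurableSet_vI hm A), setLIntegral_const,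
            measure_vI hm μ hμ A]
      _ = 2 * (B:ℝ≥0∞) * (vM m A : ℝ≥0∞) * (((vM m A : ℝ≥0∞)) ^ (1/p))⁻¹ := by
          rw [ENNReal.mul_rpow_of_nonneg _ _ h1p, ← ENNReal.rpow_mul,
            mul_one_div_cancel hp0.ne', ENNReal.rpow_one, ENNReal.inv_rpow]
  -- lower bound for ‖f_A‖_{H_p}
  have hlow : ∀ A : ℕ, (((vM m (A+1) : ℝ≥0∞))⁻¹) ^ (1/p)
      ≤ vHp μ p (fun x => vD m (vM m (A+1)) x - vD m (vM m A) x) := by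
    intro A
    rw [hHfA A]
    have hptw : ∀ x : VG m, Set.indicator (vI m (A+1)) (1 : VG m → ℝ≥0∞) x
        ≤ (ENNReal.ofReal (‖(vD m (vM m (A+1)) x - vD m (vM m A) x)‖)) ^ p := by
      intro x
      by_cases hx : x ∈ vI m (A+1)
      · rw [Set.indicator_of_mem hx]
        show (1:ℝ≥0∞) ≤ _
        have habs : (1:ℝ) ≤ ‖(vD m (vM m (A+1)) x - vD m (vM m A) x)‖ := by
          rw [fA_on hm A hx, Complex.norm_natCast]
          have h2' : 2 * vM m A ≤ vM m (A+1) := by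
            rw [vM_succ]
            exact Nat.mul_le_mul_right _ (hm A)
          have h3 := vM_pos hm A
          exact_mod_cast (by omega : 1 ≤ vM m (A+1) - vM m A)
        calc (1:ℝ≥0∞) = 1 ^ p := (ENNReal.one_rpow p).symm
          _ ≤ _ := ENNReal.rpow_le_rpow (by
              rw [← ENNReal.ofReal_one]
              exact ENNReal.ofReal_le_ofReal habs) hp0.le
      · rw [Set.indicator_of_notMem hx]
        exact zero_le
    calc (((vM m (A+1) : ℝ≥0∞))⁻¹) ^ (1/p)
        = (∫⁻ x, Set.indicator (vI m (A+1)) (1 : VG m → ℝ≥0∞) x ∂μ) ^ (1/p) := by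
          rw [lintegral_indicator_one (measurableSet_vI hm (A+1)),
            measure_vI hm μ hμ (A+1)]
      _ ≤ _ := ENNReal.rpow_le_rpow (lintegral_mono hptw) h1p
  -- lower bound for the sigma side
  have hgl : ∀ A : ℕ, ENNReal.ofReal (1/2) ≤ vHp μ p (sigAbsFA μ A) := by
    intro A
    set r : ℝ := ∫ x, ‖(vSigma μ
      (fun y => vD m (vM m (A+1)) y - vD m (vM m A) y) (vM m (A+1)) x)‖ ∂μ with hr
    have hr2 : 1/2 ≤ r := sigma_L1_lower hm μ hμ A
    have hS0 : ∀ x : VG m,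
        ENNReal.ofReal (‖(vS μ (sigAbsFA μ A) (vM m 0) x)‖) = ENNReal.ofReal r := by
      intro x
      have h0 : vM m 0 = 1 := rfl
      rw [h0, vS_one μ (sigAbsFA μ A) x, vCoeff_sigAbs hm μ A, Complex.norm_real, Real.norm_eq_abs, ← hr,
        _root_.abs_of_nonneg (le_trans (by norm_num : (0:ℝ) ≤ 1/2) hr2)]
    have hle : ENNReal.ofReal r ≤ vHp μ p (sigAbsFA μ A) := by
      unfold vHp
      have hptw : ∀ x : VG m, (ENNReal.ofReal r) ^ p
          ≤ (⨆ k, ENNReal.ofReal (‖(vS μ (sigAbsFA μ A) (vM m k) x)‖)) ^ p := by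
        intro x
        apply ENNReal.rpow_le_rpow _ hp0.le
        rw [← hS0 x]
        exact le_iSup (fun k =>
          ENNReal.ofReal (‖(vS μ (sigAbsFA μ A) (vM m k) x)‖)) 0
      calc ENNReal.ofReal r = ((ENNReal.ofReal r) ^ p) ^ (1/p) := by
            rw [← ENNReal.rpow_mul, mul_one_div_cancel hp0.ne', ENNReal.rpow_one]
        _ ≤ _ := by
            apply ENNReal.rpow_le_rpow _ h1p
            calc (ENNReal.ofReal r) ^ p
                = ∫⁻ _x, (ENNReal.ofReal r) ^ p ∂μ := by
                  rw [lintegral_const, measure_univ, mul_one]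
              _ ≤ _ := lintegral_mono hptw
    exact le_trans (ENNReal.ofReal_le_ofReal hr2) hle
  -- Part 1
  have part1 : ∀ A : ℕ,
      ENNReal.ofReal (1/2) * (2 * (B:ℝ≥0∞))⁻¹ * (vM m A : ℝ≥0∞) ^ (1 / p - 1) *
          vHp μ p (fun x => vD m (vM m (A + 1)) x - vD m (vM m A) x) ≤
        vHp μ p (sigAbsFA μ A) := by
    intro A
    set Q : ℝ≥0∞ := ((vM m A : ℕ) : ℝ≥0∞) with hQdef
    have hQe : Q ^ (1/p - 1) * Q = Q ^ (1/p) := by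
      nth_rewrite 2 [← ENNReal.rpow_one Q]
      rw [← ENNReal.rpow_add _ _ (hQ0 A) (hQtop A)]
      norm_num
      rfl
    have hQpos : (0:ℝ≥0∞) < Q := by
      rw [hQdef]
      exact_mod_cast Nat.cast_pos.mpr (vM_pos hm A)
    have hQinv : Q ^ (1/p) * (Q ^ (1/p))⁻¹ = 1 := by
      apply ENNReal.mul_inv_cancel
      · exact (ENNReal.rpow_pos hQpos (hQtop A)).ne'
      · exact ENNReal.rpow_ne_top_of_nonneg h1p (hQtop A)
    calc ENNReal.ofReal (1/2) * (2 * (B:ℝ≥0∞))⁻¹ * Q ^ (1 / p - 1) *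
            vHp μ p (fun x => vD m (vM m (A + 1)) x - vD m (vM m A) x)
        ≤ ENNReal.ofReal (1/2) * (2 * (B:ℝ≥0∞))⁻¹ * Q ^ (1 / p - 1) *
            (2 * (B:ℝ≥0∞) * Q * ((Q ^ (1/p))⁻¹)) := mul_le_mul_right (hup A) _
      _ = ENNReal.ofReal (1/2) * ((2 * (B:ℝ≥0∞))⁻¹ * (2 * (B:ℝ≥0∞)))
            * ((Q ^ (1 / p - 1) * Q) * (Q ^ (1/p))⁻¹) := by ring
      _ = ENNReal.ofReal (1/2) := by
          rw [ENNReal.inv_mul_cancel h2B0 h2Btop, mul_one, hQe, hQinv, mul_one]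
      _ ≤ vHp μ p (sigAbsFA μ A) := hgl A
  constructor
  · refine ⟨ENNReal.ofReal (1/2) * (2 * (B:ℝ≥0∞))⁻¹, ?_, part1⟩
    apply ENNReal.mul_pos
    · exact (ENNReal.ofReal_pos.mpr (by norm_num)).ne'
    · exact ENNReal.inv_ne_zero.mpr h2Btop
  · rintro ⟨C, hC⟩
    have he : (0:ℝ) < 1/p - 1 := by
      rw [sub_pos]
      rw [lt_div_iff₀ hp0, one_mul]
      exact hp1
    have hH0 : ∀ A : ℕ, vHp μ p (fun x => vD m (vM m (A + 1)) x - vD m (vM m A) x) ≠ 0 := by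
      intro A
      refine ne_of_gt (lt_of_lt_of_le ?_ (hlow A))
      exact ENNReal.rpow_pos (ENNReal.inv_pos.mpr (hQtop (A+1))) (ENNReal.inv_ne_top.mpr (hQ0 (A+1)))
    have hHtop : ∀ A : ℕ, vHp μ p (fun x => vD m (vM m (A + 1)) x - vD m (vM m A) x) ≠ ⊤ := by
      intro A
      refine ne_of_lt (lt_of_le_of_lt (hup A) ?_)
      have hQpos : (0:ℝ≥0∞) < ((vM m A : ℕ) : ℝ≥0∞) := Nat.cast_pos.mpr (vM_pos hm A)
      have h1 : 2 * (B:ℝ≥0∞) * ((vM m A : ℕ) : ℝ≥0∞) ≠ ⊤ := ENNReal.mul_ne_top h2Btop (hQtop A)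
      have h2 : ((((vM m A : ℕ) : ℝ≥0∞)) ^ (1/p))⁻¹ ≠ ⊤ :=
        ENNReal.inv_ne_top.mpr (ENNReal.rpow_pos hQpos (hQtop A)).ne'
      exact ENNReal.mul_lt_top h1.lt_top h2.lt_top
    set c : ℝ≥0∞ := ENNReal.ofReal (1/2) * (2 * (B:ℝ≥0∞))⁻¹ with hcdef
    have hc0 : c ≠ 0 := by
      apply mul_ne_zero
      · exact (ENNReal.ofReal_pos.mpr (by norm_num)).ne'
      · exact ENNReal.inv_ne_zero.mpr h2Btop
    have hctop : c ≠ ⊤ := ENNReal.mul_ne_top ENNReal.ofReal_ne_top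
      (ENNReal.inv_ne_top.mpr h2B0)
    have key : ∀ A : ℕ, c * (vM m A : ℝ≥0∞) ^ (1 / p - 1) ≤ (C : ℝ≥0∞) := by
      intro A
      have h1 := part1 A
      have h2 : vHp μ p (sigAbsFA μ A)
          ≤ (C : ℝ≥0∞) * vHp μ p (fun x => vD m (vM m (A + 1)) x - vD m (vM m A) x) :=
        hC _ (integrable_fA hm μ A) (A+1)
      have h3 := le_trans h1 h2
      exact (ENNReal.mul_le_mul_iff_left (hH0 A) (hHtop A)).mp h3
    have key2 : ∀ A : ℕ, ((vM m A : ℕ) : ℝ≥0∞) ^ (1 / p - 1) ≤ c⁻¹ * C := by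
      intro A
      calc ((vM m A : ℕ) : ℝ≥0∞) ^ (1 / p - 1)
          = c⁻¹ * (c * ((vM m A : ℕ) : ℝ≥0∞) ^ (1 / p - 1)) := by
            rw [← mul_assoc, ENNReal.inv_mul_cancel hc0 hctop, one_mul]
        _ ≤ c⁻¹ * C := mul_le_mul_right (key A) _
    have hLtop : c⁻¹ * (C : ℝ≥0∞) ≠ ⊤ :=
      ENNReal.mul_ne_top (ENNReal.inv_ne_top.mpr hc0) ENNReal.coe_ne_top
    obtain ⟨n, hn⟩ := ENNReal.exists_nat_gt hLtop
    set A : ℕ := ⌈(n:ℝ) / (1/p - 1)⌉₊ with hAdef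
    have hne : (n:ℝ) ≤ (A:ℝ) * (1/p - 1) := by
      have h4 := Nat.le_ceil ((n:ℝ) / (1/p - 1))
      calc (n:ℝ) = ((n:ℝ) / (1/p - 1)) * (1/p - 1) := (div_mul_cancel₀ _ he.ne').symm
        _ ≤ (A:ℝ) * (1/p - 1) := mul_le_mul_of_nonneg_right h4 he.le
    have hchain : (n : ℝ≥0∞) ≤ ((vM m A : ℕ) : ℝ≥0∞) ^ (1 / p - 1) := by
      calc (n : ℝ≥0∞) ≤ ((2:ℝ≥0∞)) ^ (n:ℕ) := by
            calc (n : ℝ≥0∞) ≤ ((2^n : ℕ) : ℝ≥0∞) := by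
                  exact_mod_cast (Nat.lt_two_pow_self (n := n)).le
              _ = (2:ℝ≥0∞) ^ (n:ℕ) := by push_cast; ring
        _ = (2:ℝ≥0∞) ^ ((n:ℕ):ℝ) := (ENNReal.rpow_natCast 2 n).symm
        _ ≤ (2:ℝ≥0∞) ^ ((A:ℝ) * (1/p - 1)) :=
            ENNReal.rpow_le_rpow_of_exponent_le (by norm_num) hne
        _ = ((2:ℝ≥0∞) ^ ((A:ℕ):ℝ)) ^ (1/p - 1) := by
            rw [← ENNReal.rpow_mul]
        _ = ((2:ℝ≥0∞) ^ (A:ℕ)) ^ (1/p - 1) := by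
            rw [ENNReal.rpow_natCast]
        _ ≤ ((vM m A : ℕ) : ℝ≥0∞) ^ (1/p - 1) := by
            apply ENNReal.rpow_le_rpow _ he.le
            calc (2:ℝ≥0∞) ^ (A:ℕ) = ((2^A : ℕ) : ℝ≥0∞) := by push_cast; ring
              _ ≤ ((vM m A : ℕ) : ℝ≥0∞) := by
                  exact_mod_cast two_pow_le_vM hm A
    have : (n : ℝ≥0∞) ≤ c⁻¹ * C := le_trans hchain (key2 A)
    exact absurd this (not_le.mpr hn)

/-- for `0 < p < 1`,
`‖sup_N S_{M_N}(|σ_{M_{A+1}} f_A|)‖_p ≥ c_p M_A^{1/p-1} ‖f_A‖_{H_p}`, hence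
`f ↦ |σ_{M_n} f|` is not bounded on `H_p`. -/
theorem sigma_abs_not_bounded_Hp (m : ℕ → ℕ) (hm : ∀ k, 2 ≤ m k) (hb : ∃ B, ∀ k, m k ≤ B)
    (μ : Measure (VG m)) [IsProbabilityMeasure μ] (hμ : isVHaar μ)
    (p : ℝ) (hp0 : 0 < p) (hp1 : p < 1) :
    (∃ c : ℝ≥0∞, 0 < c ∧ ∀ A : ℕ,
      c * (vM m A : ℝ≥0∞) ^ (1 / p - 1) *
          vHp μ p (fun x => vD m (vM m (A + 1)) x - vD m (vM m A) x) ≤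
        vHp μ p (sigAbsFA μ A)) ∧
    ¬ ∃ C : ℝ≥0, ∀ f : VG m → ℂ, Integrable f μ → ∀ n : ℕ,
        vHp μ p (fun x => ((‖vSigma μ f (vM m n) x‖ : ℝ) : ℂ)) ≤ C * vHp μ p f :=
  main_thm hm hb μ hμ p hp0 hp1

end
end
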